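/- arXiv:2104.05346 — 8 statements merged into one kernel-verified Lean document; each statement's English description precedes it below -/
import Mathlib

section
/- For λ ∈ (0,1] and θ ∈ ℝ, the function N(z) = (1 − λz²)(1 − λ·conj(z))² satisfies Re N(z) ≥ (1−λ)³ ≥ 0 for all z on the unit circle |z| = 1. -/
open Complex

/-- For `λ ∈ (0,1]`, `N(z) = (1 − λz²)(1 − λ conj z)²` has `Re N(z) ≥ (1−λ)³ ≥ 0` on the
unit circle. -/
theorem stmt_2 (lam : ℝ) (hlam : lam ∈ Set.Ioc (0 : ℝ) 1) (N : ℂ → ℂ)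
    (hN : ∀ z, N z = (1 - (lam : ℂ) * z ^ 2) * (1 - (lam : ℂ) * (starRingEnd ℂ) z) ^ 2) :
    ∀ z : ℂ, ‖z‖ = 1 → (1 - lam) ^ 3 ≤ (N z).re ∧ (0 : ℝ) ≤ (1 - lam) ^ 3 := by
  obtain ⟨h0, h1⟩ := hlam
  intro z hz
  have hzz : z.re ^ 2 + z.im ^ 2 = 1 := by
    have := hz
    have h2 : ‖z‖ ^ 2 = 1 := by rw [this]; ring
    rw [Complex.sq_norm, Complex.normSq_apply] at h2
    nlinarith [h2]
  have hx : z.re ^ 2 ≤ 1 := by nlinarith [sq_nonneg z.im]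
  have hx1 : -1 ≤ z.re := by nlinarith
  have hx2 : z.re ≤ 1 := by nlinarith
  constructor
  · rw [hN]
    simp only [Complex.sub_re, Complex.mul_re, Complex.mul_im, Complex.sub_im,
      Complex.one_re, Complex.one_im, Complex.ofReal_re, Complex.ofReal_im,
      pow_two, Complex.conj_re, Complex.conj_im]
    ring_nf
    have him : z.im ^ 2 = 1 - z.re ^ 2 := by linarith
    have him4 : z.im ^ 4 = (1 - z.re ^ 2) ^ 2 := by
      rw [show (4:ℕ) = 2*2 from rfl, pow_mul, him]
    rw [him, him4]
    nlinarith [ mul_nonneg (mul_nonneg (mul_nonneg h0.le (sub_nonneg.2 h1)) (by linarith : (0:ℝ) ≤ z.re + 2)) (by linarith : (0:ℝ) ≤ 1 - z.re), sq_nonneg (z.re - 1), sq_nonneg (z.re + 1)]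
  · exact pow_nonneg (by linarith) 3
end

section
/- For λ ∈ (0,1], θ ∈ ℝ, and the function f_θ(z) = z/(1 − (1+λ)e^{iθ}z + λe^{2iθ}z²), the expression Re{(1 − e^{iθ}z)²·f_θ'(z)} is strictly positive for every z in the open unit disk. Consequently f_θ is convex in the direction 2π − θ. -/
open Complex Metric

/-- A set `D ⊆ ℂ` is convex in the direction `γ` if every line parallel to the line through
`0` and `e^{iγ}` meets `D` in a connected set. -/
def ConvexInDirection (γ : ℝ) (D : Set ℂ) : Prop :=
  ∀ b : ℂ, IsPreconnected ((fun t : ℝ => b + (t : ℂ) * Complex.exp ((γ : ℂ) * Complex.I)) ⁻¹' D)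


noncomputable section
def RD (l c s : ℝ) : ℝ := (1-l)^2*(s^2-c^2) + 2*(1+l)*s + 1
def ID (l c s : ℝ) : ℝ := 2*c*((1-l)^2*s + (1+l))
def Krt (l c s : ℝ) : ℝ := Real.sqrt ((RD l c s)^2 + (ID l c s)^2)
def Crit (l c s : ℝ) : Prop := 0 < (1-l)*s + Real.sqrt ((Krt l c s + RD l c s)/2)

lemma Krt_nonneg (l c s : ℝ) : 0 ≤ Krt l c s := Real.sqrt_nonneg _
lemma Krt_sq (l c s : ℝ) : (Krt l c s)^2 = (RD l c s)^2 + (ID l c s)^2 :=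
  Real.sq_sqrt (by positivity)
lemma abs_RD_le_Krt (l c s : ℝ) : |RD l c s| ≤ Krt l c s := by
  rw [← Real.sqrt_sq_eq_abs, Krt]
  exact Real.sqrt_le_sqrt (by nlinarith [sq_nonneg (ID l c s)])
lemma abs_RD_lt_Krt (l c s : ℝ) (h : ID l c s ≠ 0) : |RD l c s| < Krt l c s := by
  rw [← Real.sqrt_sq_eq_abs, Krt]
  apply Real.sqrt_lt_sqrt (sq_nonneg _)
  have : 0 < (ID l c s)^2 := by positivity
  linarith

lemma crit_of_nonneg (l c s : ℝ) (hl : 0 < l) (hl1 : l ≤ 1) (hs : 0 ≤ s) : Crit l c s := by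
  have h1 : 0 < Krt l c s + RD l c s := by
    rcases eq_or_ne c 0 with hc | hc
    · have hRD : 0 < RD l c s := by
        unfold RD; subst hc; nlinarith [mul_nonneg (sq_nonneg (1-l)) (sq_nonneg s)]
      have := Krt_nonneg l c s; linarith
    · have hID : ID l c s ≠ 0 := by
        unfold ID
        have h2 : 0 < (1-l)^2*s + (1+l) := by nlinarith [mul_nonneg (sq_nonneg (1-l)) hs]
        exact mul_ne_zero (by simpa using hc) (ne_of_gt h2)
      have h3 := abs_RD_lt_Krt l c s hID
      have h4 := neg_abs_le (RD l c s)
      linarith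
  have h2 : 0 < Real.sqrt ((Krt l c s + RD l c s)/2) := Real.sqrt_pos.2 (by linarith)
  have h3 : 0 ≤ (1-l)*s := by nlinarith
  unfold Crit; linarith

def Psi (l c s : ℝ) : ℝ :=
  2*(1-l)^2*(1+l)*s^3 + (1-l)^2*s^2 + 2*(1-l)^2*(1+l)*c^2*s + (1+l)^2*c^2

lemma crit_iff_psi (l c s : ℝ) (hl : 0 < l) (hl1 : l < 1) (hs : s < 0) :
    Crit l c s ↔ 0 < Psi l c s := by
  have hK0 : 0 ≤ Krt l c s := Krt_nonneg l c s
  have hK2 : (Krt l c s)^2 = (RD l c s)^2 + (ID l c s)^2 := Krt_sq l c s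
  have habs := abs_RD_le_Krt l c s
  have hKR1 : -RD l c s ≤ Krt l c s := le_trans (neg_le_abs _) habs
  have hKR2 : RD l c s ≤ Krt l c s := le_trans (le_abs_self _) habs
  have hident : (Krt l c s)^2 - (2*(1-l)^2*s^2 - RD l c s)^2 = 4 * Psi l c s := by
    rw [hK2]; unfold RD ID Psi; ring
  have hstep1 : Crit l c s ↔ 2*(1-l)^2*s^2 - RD l c s < Krt l c s := by
    unfold Crit
    rw [show (0 < (1-l)*s + Real.sqrt ((Krt l c s + RD l c s)/2)) ↔
        ((1-l)*(-s) < Real.sqrt ((Krt l c s + RD l c s)/2)) from by constructor <;> intro <;> linarith]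
    rw [Real.lt_sqrt (by nlinarith)]
    constructor <;> intro h <;> nlinarith
  rw [hstep1]
  have hss : 0 < s*s := mul_pos_of_neg_of_neg hs hs
  have hs2 : 0 < 2*(1-l)^2*s^2 := by
    have h1 : (0:ℝ) < (1-l)^2 := pow_pos (by linarith) 2
    nlinarith
  have hKmt : -(2*(1-l)^2*s^2 - RD l c s) < Krt l c s := by nlinarith
  constructor
  · intro h; nlinarith
  · intro h; nlinarith [sq_nonneg (Krt l c s - (2*(1-l)^2*s^2 - RD l c s))]

lemma psi_mono (l c : ℝ) (hl : 0 < l) (hl1 : l < 1) {s₁ s₂ : ℝ} (h12 : s₁ ≤ s₂) (hs2 : s₂ < 0)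
    (h : 0 < Psi l c s₁) : 0 < Psi l c s₂ := by
  have hs1 : s₁ < 0 := lt_of_le_of_lt h12 hs2
  rcases le_or_gt (2*(1+l)*s₂ + 1) 0 with hcase | hcase
  · -- psi is nondecreasing on this region
    have h1 : 2*(1+l)*s₁ + 1 ≤ 0 := by nlinarith
    have e1 : 0 ≤ s₁*(2*(1+l)*s₁+1) := by nlinarith [mul_nonneg (neg_nonneg.2 hs1.le) (neg_nonneg.2 h1)]
    have e2 : 0 ≤ s₂*(2*(1+l)*s₂+1) := by nlinarith [mul_nonneg (neg_nonneg.2 hs2.le) (neg_nonneg.2 hcase)]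
    have e3 : 0 ≤ 2*(1+l)*(s₁*s₂) := by
      have := mul_pos_of_neg_of_neg hs1 hs2; nlinarith
    have hbr : 0 ≤ 2*(1+l)*(s₂^2+s₁*s₂+s₁^2) + (s₁+s₂) + 2*(1+l)*c^2 := by nlinarith [sq_nonneg c]
    have key : Psi l c s₁ ≤ Psi l c s₂ := by
      have h5 : 0 ≤ (s₂ - s₁) * ((1-l)^2 * (2*(1+l)*(s₂^2+s₁*s₂+s₁^2) + (s₁+s₂) + 2*(1+l)*c^2)) :=
        mul_nonneg (by linarith) (mul_nonneg (sq_nonneg _) hbr)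
      unfold Psi; nlinarith [h5]
    linarith
  · -- both terms of psi positive
    have ha2 : 0 < (1-l)^2 := pow_pos (by linarith) 2
    have h1 : 0 < 2*(1-l)^2*s₂ + (1+l) := by nlinarith
    have h2 : 0 < (1-l)^2*s₂^2*(2*(1+l)*s₂+1) := by
      have hss : 0 < s₂*s₂ := mul_pos_of_neg_of_neg hs2 hs2
      nlinarith [sq_nonneg (1-l), mul_pos ha2 hss]
    have h3 : 0 ≤ c^2*((1+l)*(2*(1-l)^2*s₂ + (1+l))) :=
      mul_nonneg (sq_nonneg c) (mul_nonneg (by linarith) h1.le)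
    unfold Psi; nlinarith [h2, h3]

lemma crit_mono (l c : ℝ) (hl : 0 < l) (hl1 : l ≤ 1) {s₁ s₂ : ℝ} (h12 : s₁ ≤ s₂)
    (h : Crit l c s₁) : Crit l c s₂ := by
  rcases le_or_gt 0 s₂ with hs2 | hs2
  · exact crit_of_nonneg l c s₂ hl hl1 hs2
  have hs1 : s₁ < 0 := lt_of_le_of_lt h12 hs2
  rcases eq_or_lt_of_le hl1 with hone | hlt
  · -- l = 1
    subst hone
    have hcrit1 : ∀ s : ℝ, Crit 1 c s ↔ 0 < Krt 1 c s + RD 1 c s := by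
      intro s
      unfold Crit
      rw [show ((1:ℝ)-1)*s = 0 by ring, zero_add, Real.sqrt_pos]
      constructor <;> intro <;> linarith
    rw [hcrit1] at h ⊢
    rcases eq_or_ne c 0 with hc | hc
    · subst hc
      have hKabs : ∀ s : ℝ, Krt 1 0 s = |RD 1 0 s| := by
        intro s
        unfold Krt
        rw [show ID 1 0 s = 0 by unfold ID; ring]
        rw [show (RD 1 0 s)^2 + 0^2 = (RD 1 0 s)^2 by ring, Real.sqrt_sq_eq_abs]
      rw [hKabs] at h ⊢
      have hRD1 : 0 < RD 1 0 s₁ := by rcases abs_cases (RD 1 0 s₁) with ⟨h1,h2⟩|⟨h1,h2⟩ <;> linarith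
      have hRD2 : RD 1 0 s₁ ≤ RD 1 0 s₂ := by unfold RD; nlinarith
      rcases abs_cases (RD 1 0 s₂) with ⟨h1,h2⟩|⟨h1,h2⟩ <;> linarith
    · have hID : ID 1 c s₂ ≠ 0 := by
        unfold ID
        rw [show ((1:ℝ)-1)^2*s₂ + (1+1) = 2 by ring]
        simpa using hc
      have h3 := abs_RD_lt_Krt 1 c s₂ hID
      have h4 := neg_abs_le (RD 1 c s₂)
      linarith
  · rw [crit_iff_psi l c s₂ hl hlt hs2]
    rw [crit_iff_psi l c s₁ hl hlt hs1] at h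
    exact psi_mono l c hl hlt h12 hs2 h

lemma sqrt_re_of_sq {r D : ℂ} (h : r^2 = D) :
    |r.re| = Real.sqrt ((‖D‖ + D.re)/2) := by
  have h1 : ‖D‖ = r.re*r.re + r.im*r.im := by
    rw [← h, norm_pow, Complex.sq_norm, Complex.normSq_apply]
  have h2 : D.re = r.re*r.re - r.im*r.im := by
    rw [← h, pow_two, Complex.mul_re]
  rw [h1, h2, show (r.re*r.re + r.im*r.im + (r.re*r.re - r.im*r.im))/2 = r.re^2 by ring,
    Real.sqrt_sq_eq_abs]

lemma cayley1 {ζ : ℂ} (h : ‖ζ‖ < 1) : 0 < ((1+ζ)/(1-ζ)).re := by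
  have hns : Complex.normSq ζ < 1 := by
    have := Complex.normSq_eq_norm_sq ζ; nlinarith [norm_nonneg ζ]
  have hd : (1:ℂ) - ζ ≠ 0 := by
    intro h0
    have h1 : ζ = 1 := by linear_combination -h0
    rw [h1] at h; simp at h
  have h0 : 0 < Complex.normSq (1-ζ) := Complex.normSq_pos.2 hd
  have key : 0 < ((1+ζ).re*(1-ζ).re + (1+ζ).im*(1-ζ).im) := by
    simp only [Complex.normSq_apply] at hns
    simp only [Complex.add_re, Complex.add_im, Complex.sub_re, Complex.sub_im,
      Complex.one_re, Complex.one_im]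
    nlinarith
  rw [Complex.div_re, ← add_div]
  exact div_pos key h0

lemma cayley2 {u : ℂ} (h : 0 < u.re) : ‖((u-1)/(u+1))‖ < 1 := by
  have hd : u + 1 ≠ 0 := by
    intro h0
    have h1 : (u+1).re = 0 := by rw [h0]; simp
    rw [Complex.add_re, Complex.one_re] at h1; linarith
  have habs : 0 < ‖(u+1)‖ := by
    rw [norm_pos_iff]; exact hd
  rw [norm_div, div_lt_one habs]
  rw [Complex.norm_def, Complex.norm_def]
  apply Real.sqrt_lt_sqrt (Complex.normSq_nonneg _)
  simp only [Complex.normSq_apply, Complex.sub_re, Complex.sub_im, Complex.add_re,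
    Complex.add_im, Complex.one_re, Complex.one_im]
  nlinarith

lemma mem_image_iff (l θ : ℝ) (hl0 : 0 < l) (hl1 : l ≤ 1) (f : ℂ → ℂ)
    (hf : ∀ z, f z = z / ((1 - Complex.exp ((θ:ℂ)*Complex.I) * z) *
      (1 - (l:ℂ) * Complex.exp ((θ:ℂ)*Complex.I) * z))) (w : ℂ) :
    w ∈ f '' Metric.ball 0 1 ↔
      Crit l (Complex.exp ((θ:ℂ)*Complex.I) * w).im (Complex.exp ((θ:ℂ)*Complex.I) * w).re := by
  set a := Complex.exp ((θ:ℂ)*Complex.I) with ha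
  have habsa : ‖a‖ = 1 := by rw [ha, Complex.norm_exp]; simp
  set W := a * w with hWdef
  have hDre : ((1-(l:ℂ))^2*W^2 + 2*(1+(l:ℂ))*W + 1).re = RD l W.im W.re := by
    simp only [RD, pow_two, Complex.add_re, Complex.mul_re, Complex.mul_im, Complex.sub_re,
      Complex.sub_im, Complex.one_re, Complex.one_im, Complex.ofReal_re, Complex.ofReal_im,
      Complex.add_im, Complex.re_ofNat, Complex.im_ofNat]
    ring
  have hDim : ((1-(l:ℂ))^2*W^2 + 2*(1+(l:ℂ))*W + 1).im = ID l W.im W.re := by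
    simp only [ID, pow_two, Complex.add_re, Complex.mul_re, Complex.mul_im, Complex.sub_re,
      Complex.sub_im, Complex.one_re, Complex.one_im, Complex.ofReal_re, Complex.ofReal_im,
      Complex.add_im, Complex.re_ofNat, Complex.im_ofNat]
    ring
  have hDabs : ‖((1-(l:ℂ))^2*W^2 + 2*(1+(l:ℂ))*W + 1)‖ = Krt l W.im W.re := by
    rw [Complex.norm_def, Complex.normSq_apply, hDre, hDim, Krt,
      show RD l W.im W.re * RD l W.im W.re + ID l W.im W.re * ID l W.im W.re
        = (RD l W.im W.re)^2 + (ID l W.im W.re)^2 by ring]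
  have hcrit : Crit l W.im W.re ↔
      0 < (1-l)*W.re + Real.sqrt ((‖((1-(l:ℂ))^2*W^2 + 2*(1+(l:ℂ))*W + 1)‖
        + ((1-(l:ℂ))^2*W^2 + 2*(1+(l:ℂ))*W + 1).re)/2) := by
    rw [Crit, hDabs, hDre]
  rw [hcrit]
  constructor
  · rintro ⟨z, hz, hfz⟩
    rw [mem_ball_zero_iff] at hz
    have habsz : ‖z‖ < 1 := by exact hz
    have habsζ : ‖(a*z)‖ < 1 := by rw [norm_mul, habsa, one_mul]; exact habsz
    have d1 : (1:ℂ) - a*z ≠ 0 := by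
      intro h0
      have h1 : a*z = 1 := by linear_combination -h0
      rw [h1] at habsζ; simp at habsζ
    have d2 : (1:ℂ) - (l:ℂ)*(a*z) ≠ 0 := by
      intro h0
      have h1 : (l:ℂ)*(a*z) = 1 := by linear_combination -h0
      have h2 : ‖((l:ℂ)*(a*z))‖ = 1 := by rw [h1]; simp
      rw [norm_mul, Complex.norm_real, Real.norm_eq_abs, abs_of_pos hl0] at h2
      nlinarith [norm_nonneg (a*z)]
    have hW : W = (a*z)/((1 - a*z)*(1-(l:ℂ)*(a*z))) := by
      rw [hWdef, ← hfz, hf z,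
        show (1 - (l:ℂ)*a*z) = (1 - (l:ℂ)*(a*z)) by ring, mul_div_assoc']
    have hure : 0 < ((1+(a*z))/(1-(a*z))).re := cayley1 habsζ
    have hr2 : ((1+(a*z))/(1-(a*z)) - (1-(l:ℂ))*W)^2 = (1-(l:ℂ))^2*W^2 + 2*(1+(l:ℂ))*W + 1 := by
      rw [hW]
      have d2'' : (1:ℂ) - a*z*(l:ℂ) ≠ 0 := by rw [mul_comm]; exact d2
      field_simp
      ring
    have hre := sqrt_re_of_sq hr2
    have hsum : (1-l)*W.re + ((1+(a*z))/(1-(a*z)) - (1-(l:ℂ))*W).re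
        = ((1+(a*z))/(1-(a*z))).re := by
      simp only [Complex.sub_re, Complex.mul_re, Complex.sub_im, Complex.one_re, Complex.one_im,
        Complex.ofReal_re, Complex.ofReal_im]
      ring
    have hle := le_abs_self ((1+(a*z))/(1-(a*z)) - (1-(l:ℂ))*W).re
    rw [← hre]
    linarith
  · intro hcritw
    obtain ⟨r0, hr0⟩ := IsAlgClosed.exists_pow_nat_eq
      ((1-(l:ℂ))^2*W^2 + 2*(1+(l:ℂ))*W + 1) zero_lt_two
    obtain ⟨r, hr2, hrre⟩ : ∃ r : ℂ, r^2 = (1-(l:ℂ))^2*W^2 + 2*(1+(l:ℂ))*W + 1 ∧ 0 ≤ r.re := by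
      rcases le_or_gt 0 r0.re with h | h
      · exact ⟨r0, hr0, h⟩
      · exact ⟨-r0, by rw [neg_sq]; exact hr0, by rw [Complex.neg_re]; linarith⟩
    have hrre2 : r.re = Real.sqrt ((‖((1-(l:ℂ))^2*W^2 + 2*(1+(l:ℂ))*W + 1)‖
        + ((1-(l:ℂ))^2*W^2 + 2*(1+(l:ℂ))*W + 1).re)/2) := by
      rw [← sqrt_re_of_sq hr2, _root_.abs_of_nonneg hrre]
    have hre2 : ((1-(l:ℂ))*W + r).re = (1-l)*W.re + r.re := by
      simp only [Complex.add_re, Complex.mul_re, Complex.sub_re, Complex.sub_im, Complex.one_re,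
        Complex.one_im, Complex.ofReal_re, Complex.ofReal_im]
      ring
    have hure : 0 < ((1-(l:ℂ))*W + r).re := by
      rw [hre2, hrre2]; exact hcritw
    have hquad : ((1-(l:ℂ))*W + r)^2 - 2*(1-(l:ℂ))*W*((1-(l:ℂ))*W + r)
        - (2*(1+(l:ℂ))*W + 1) = 0 := by linear_combination hr2
    have hu1 : ((1-(l:ℂ))*W + r) + 1 ≠ 0 := by
      intro h0
      have h1 : (((1-(l:ℂ))*W + r) + 1).re = 0 := by rw [h0]; simp
      rw [Complex.add_re, Complex.one_re] at h1; linarith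
    have hζ : ‖((((1-(l:ℂ))*W + r) - 1)/(((1-(l:ℂ))*W + r) + 1))‖ < 1 :=
      cayley2 hure
    set ζ := (((1-(l:ℂ))*W + r) - 1)/(((1-(l:ℂ))*W + r) + 1) with hζdef
    set a' := Complex.exp (-((θ:ℂ)*Complex.I)) with ha'
    have haa' : a * a' = 1 := by
      rw [ha, ha', ← Complex.exp_add, add_neg_cancel, Complex.exp_zero]
    have habsa' : ‖a'‖ = 1 := by rw [ha', Complex.norm_exp]; simp
    have d1 : (1:ℂ) - ζ ≠ 0 := by
      intro h0
      have h1 : ζ = 1 := by linear_combination -h0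
      rw [h1] at hζ; simp at hζ
    have d2 : (1:ℂ) - (l:ℂ)*ζ ≠ 0 := by
      intro h0
      have h1 : (l:ℂ)*ζ = 1 := by linear_combination -h0
      have h2 : ‖((l:ℂ)*ζ)‖ = 1 := by rw [h1]; simp
      rw [norm_mul, Complex.norm_real, Real.norm_eq_abs, abs_of_pos hl0] at h2
      nlinarith [norm_nonneg ζ]
    refine ⟨a' * ζ, ?_, ?_⟩
    · rw [mem_ball_zero_iff]
      rw [show ‖a' * ζ‖ = ‖(a' * ζ)‖ from rfl, norm_mul, habsa', one_mul]
      exact hζ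
    · rw [hf]
      have e1 : a * (a' * ζ) = ζ := by rw [← mul_assoc, haa', one_mul]
      have e2 : (l:ℂ) * a * (a' * ζ) = (l:ℂ) * ζ := by rw [mul_assoc, e1]
      rw [e1, e2]
      have hw' : w = a' * W := by
        rw [hWdef, ← mul_assoc, mul_comm a' a, haa', one_mul]
      rw [hw', mul_div_assoc]
      congr 1
      rw [div_eq_iff (mul_ne_zero d1 d2)]
      rw [hζdef]
      field_simp
      linear_combination hquad


/-- For `λ ∈ (0,1]`, `θ ∈ [0,2π)` and `f_θ(z) = z/((1 − e^{iθ}z)(1 − λe^{iθ}z))`,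
the quantity `Re((1 − e^{iθ}z)² f_θ'(z))` is positive on the unit disk; consequently
`f_θ` is (univalent and) convex in the direction `2π − θ`. -/
theorem stmt_3 (lam θ : ℝ) (hlam : lam ∈ Set.Ioc (0 : ℝ) 1)
    (hθ : θ ∈ Set.Ico (0 : ℝ) (2 * Real.pi)) (f : ℂ → ℂ)
    (hf : ∀ z, f z = z / ((1 - Complex.exp ((θ : ℂ) * Complex.I) * z) *
      (1 - (lam : ℂ) * Complex.exp ((θ : ℂ) * Complex.I) * z))) :
    (∀ z ∈ ball (0 : ℂ) 1,
      0 < ((1 - Complex.exp ((θ : ℂ) * Complex.I) * z) ^ 2 * deriv f z).re) ∧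
    Set.InjOn f (ball (0 : ℂ) 1) ∧
    ConvexInDirection (2 * Real.pi - θ) (f '' ball (0 : ℂ) 1) := by
  obtain ⟨hl0, hl1⟩ := hlam
  set a := Complex.exp ((θ:ℂ)*Complex.I) with ha
  have habsa : ‖a‖ = 1 := by rw [ha, Complex.norm_exp]; simp
  have hden : ∀ z : ℂ, ‖z‖ < 1 →
      ((1 - a*z ≠ 0) ∧ (1 - (lam:ℂ)*a*z ≠ 0)) := by
    intro z hz
    have habsζ : ‖(a*z)‖ < 1 := by rw [norm_mul, habsa, one_mul]; exact hz
    constructor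
    · intro h0
      have h1 : a*z = 1 := by linear_combination -h0
      rw [h1] at habsζ; simp at habsζ
    · intro h0
      have h1 : (lam:ℂ)*(a*z) = 1 := by linear_combination -h0
      have h2 : ‖((lam:ℂ)*(a*z))‖ = 1 := by rw [h1]; simp
      rw [norm_mul, Complex.norm_real, Real.norm_eq_abs, abs_of_pos hl0] at h2
      nlinarith [norm_nonneg (a*z)]
  refine ⟨?_, ?_, ?_⟩
  · -- positivity
    intro z hz
    rw [mem_ball_zero_iff] at hz
    have habsz : ‖z‖ < 1 := by exact hz
    obtain ⟨d1, d2⟩ := hden z habsz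
    have h1 : HasDerivAt (fun y : ℂ => 1 - a*y) (-a) z := by
      simpa using ((hasDerivAt_id z).const_mul a).const_sub 1
    have h2 : HasDerivAt (fun y : ℂ => 1 - (lam:ℂ)*a*y) (-((lam:ℂ)*a)) z := by
      simpa using ((hasDerivAt_id z).const_mul ((lam:ℂ)*a)).const_sub 1
    have hq := h1.mul h2
    have hdenz : (1 - a*z)*(1 - (lam:ℂ)*a*z) ≠ 0 := mul_ne_zero d1 d2
    have hdiv := (hasDerivAt_id z).div hq hdenz
    have hfeq : f = fun y : ℂ => y / ((1 - a*y)*(1 - (lam:ℂ)*a*y)) := funext hf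
    have hderiv : deriv f z = (1*((1 - a*z)*(1 - (lam:ℂ)*a*z)) -
        z*((-a)*(1 - (lam:ℂ)*a*z) + (1 - a*z)*(-((lam:ℂ)*a)))) /
        ((1 - a*z)*(1 - (lam:ℂ)*a*z))^2 := by
      rw [hfeq]; exact hdiv.deriv
    have key : (1 - a*z)^2 * deriv f z
        = (1 - (lam:ℂ)*(a*z)^2)/(1 - (lam:ℂ)*(a*z))^2 := by
      rw [hderiv]
      have d2' : (1:ℂ) - (lam:ℂ)*(a*z) ≠ 0 := by
        intro h0; apply d2; rw [← h0]; ring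
      field_simp
      ring
    rw [key]
    -- now positivity of the real part
    obtain ⟨ζ, hζeq⟩ : ∃ ζ : ℂ, a*z = ζ := ⟨a*z, rfl⟩
    rw [hζeq]
    have habsζ : ‖ζ‖ < 1 := by
      rw [← hζeq, norm_mul, habsa, one_mul]; exact habsz
    have d2' : (1:ℂ) - (lam:ℂ)*ζ ≠ 0 := by
      intro h0; apply d2; rw [← hζeq] at h0; rw [← h0]; ring
    have hM : ((1:ℂ) - (lam:ℂ)*ζ)^2 ≠ 0 := pow_ne_zero 2 d2'
    have hns : Complex.normSq ((1 - (lam:ℂ)*ζ)^2) > 0 := Complex.normSq_pos.2 hM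
    have hxy : ζ.re^2 + ζ.im^2 < 1 := by
      have h3 := Complex.normSq_eq_norm_sq ζ
      rw [Complex.normSq_apply] at h3
      nlinarith [norm_nonneg ζ]
    have hMpos : 0 < (1 - lam*ζ.re)^2 + lam^2*ζ.im^2 := by
      have h4 : Complex.normSq (1 - (lam:ℂ)*ζ) > 0 := Complex.normSq_pos.2 d2'
      rw [Complex.normSq_apply] at h4
      simp only [Complex.sub_re, Complex.sub_im, Complex.mul_re, Complex.mul_im,
        Complex.one_re, Complex.one_im, Complex.ofReal_re, Complex.ofReal_im] at h4
      nlinarith [h4]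
    have hnum : 0 < (1 - (lam:ℂ)*ζ^2).re * ((1 - (lam:ℂ)*ζ)^2).re
        + (1 - (lam:ℂ)*ζ^2).im * ((1 - (lam:ℂ)*ζ)^2).im := by
      have hident : (1 - (lam:ℂ)*ζ^2).re * ((1 - (lam:ℂ)*ζ)^2).re
          + (1 - (lam:ℂ)*ζ^2).im * ((1 - (lam:ℂ)*ζ)^2).im
          = ((1 - lam*ζ.re)^2 + lam^2*ζ.im^2) * (1 - lam*(ζ.re^2+ζ.im^2))
            + 2*lam*(1-lam)*ζ.im^2 := by
        simp only [pow_two, Complex.sub_re, Complex.sub_im, Complex.mul_re, Complex.mul_im,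
          Complex.one_re, Complex.one_im, Complex.ofReal_re, Complex.ofReal_im]
        ring
      rw [hident]
      have h5 : 0 < 1 - lam*(ζ.re^2+ζ.im^2) := by nlinarith [sq_nonneg ζ.re, sq_nonneg ζ.im]
      nlinarith [mul_pos hMpos h5, mul_nonneg (mul_nonneg (by linarith : (0:ℝ) ≤ 2*lam)
        (by linarith : (0:ℝ) ≤ 1-lam)) (sq_nonneg ζ.im)]
    rw [Complex.div_re, ← add_div]
    exact div_pos hnum hns
  · -- injectivity
    intro z hz w hw hzw
    rw [mem_ball_zero_iff] at hz hw
    have habsz : ‖z‖ < 1 := by exact hz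
    have habsw : ‖w‖ < 1 := by exact hw
    obtain ⟨dz1, dz2⟩ := hden z habsz
    obtain ⟨dw1, dw2⟩ := hden w habsw
    rw [hf z, hf w] at hzw
    have hcross : z * ((1 - a*w)*(1 - (lam:ℂ)*a*w)) = w * ((1 - a*z)*(1 - (lam:ℂ)*a*z)) :=
      (div_eq_div_iff (mul_ne_zero dz1 dz2) (mul_ne_zero dw1 dw2)).1 hzw
    have key : (z - w) * (1 - (lam:ℂ)*a^2*z*w) = 0 := by linear_combination hcross
    have h2 : 1 - (lam:ℂ)*a^2*z*w ≠ 0 := by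
      intro h0
      have h1 : (lam:ℂ)*a^2*z*w = 1 := by linear_combination -h0
      have h2 : ‖((lam:ℂ)*a^2*z*w)‖ = 1 := by rw [h1]; simp
      rw [norm_mul, norm_mul, norm_mul, norm_pow, habsa, Complex.norm_real, Real.norm_eq_abs, abs_of_pos hl0] at h2
      nlinarith [norm_nonneg z, norm_nonneg w,
        mul_pos (sub_pos.2 habsz) (sub_pos.2 habsw),
        mul_nonneg (norm_nonneg z) (norm_nonneg w)]
    have h3 := mul_eq_zero.1 key
    rcases h3 with h3 | h3
    · exact sub_eq_zero.1 h3
    · exact absurd h3 h2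
  · -- convexity in direction
    intro b
    set a' := Complex.exp (-((θ:ℂ)*Complex.I)) with ha'
    have haa' : a * a' = 1 := by
      rw [ha, ha', ← Complex.exp_add, add_neg_cancel, Complex.exp_zero]
    have hdir : Complex.exp (((2 * Real.pi - θ : ℝ):ℂ) * Complex.I) = a' := by
      rw [ha']
      rw [show (((2 * Real.pi - θ : ℝ):ℂ) * Complex.I)
          = 2*(Real.pi:ℂ)*Complex.I + (-((θ:ℂ)*Complex.I)) by push_cast; ring]
      rw [Complex.exp_add, Complex.exp_two_pi_mul_I, one_mul]
    have hmem : ∀ t : ℝ, (b + (t:ℂ) * a' ∈ f '' ball 0 1) ↔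
        Crit lam (a*b).im ((a*b).re + t) := by
      intro t
      rw [mem_image_iff lam θ hl0 hl1 f hf]
      have hcalc : a * (b + (t:ℂ)*a') = a*b + (t:ℂ) := by
        rw [mul_add, ← mul_assoc]
        rw [show a * (t:ℂ) = (t:ℂ) * a by ring]
        rw [mul_assoc, haa', mul_one]
      rw [← ha, hcalc]
      simp only [Complex.add_re, Complex.add_im, Complex.ofReal_re, Complex.ofReal_im, add_zero]
    have hup : ∀ t₁ t₂ : ℝ, t₁ ≤ t₂ →
        (b + (t₁:ℂ) * a' ∈ f '' ball 0 1) → (b + (t₂:ℂ) * a' ∈ f '' ball 0 1) := by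
      intro t₁ t₂ h12 h1
      rw [hmem] at h1 ⊢
      exact crit_mono lam (a*b).im hl0 hl1 (by linarith) h1
    have hconn : Set.OrdConnected
        ((fun t : ℝ => b + (t:ℂ) * Complex.exp ((((2 * Real.pi - θ : ℝ)):ℂ) * Complex.I)) ⁻¹'
          (f '' ball 0 1)) := by
      constructor
      intro x hx y hy t ht
      simp only [Set.mem_preimage, hdir] at hx hy ⊢
      exact hup x t ht.1 hx
    exact hconn.isPreconnected
end
end

section
/- For λ ∈ (0,1], p ∈ (0,1], and every s on the unit circle |s| = 1, the real part of (1 − λps²)(1 + s²)/(1 + λps²)² equals (1−λp)·[1 + 4λp + λ²p² + (1+λp)²·Re(s²) − 2λp·(Re(s²))²]/|1 + λps²|⁴ and is nonnegative. -/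
open Complex

/-- For `λ, p ∈ (0,1]` and `|s| = 1`, the real part of `(1 − λps²)(1 + s²)/(1 + λps²)²`
equals the stated expression and is nonnegative. -/
theorem stmt_4 (lam p : ℝ) (hlam : lam ∈ Set.Ioc (0 : ℝ) 1) (hp : p ∈ Set.Ioc (0 : ℝ) 1) :
    ∀ s : ℂ, ‖s‖ = 1 →
      (((1 - (lam : ℂ) * (p : ℂ) * s ^ 2) * (1 + s ^ 2) /
          (1 + (lam : ℂ) * (p : ℂ) * s ^ 2) ^ 2).re =
        (1 - lam * p) * (1 + 4 * lam * p + lam ^ 2 * p ^ 2 +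
            (1 + lam * p) ^ 2 * (s ^ 2).re - 2 * lam * p * ((s ^ 2).re) ^ 2) /
          ‖1 + (lam : ℂ) * (p : ℂ) * s ^ 2‖ ^ 4) ∧
      0 ≤ ((1 - (lam : ℂ) * (p : ℂ) * s ^ 2) * (1 + s ^ 2) /
          (1 + (lam : ℂ) * (p : ℂ) * s ^ 2) ^ 2).re := by
  obtain ⟨hl0, hl1⟩ := hlam
  obtain ⟨hp0, hp1⟩ := hp
  intro s hs
  have hcast : (lam : ℂ) * (p : ℂ) = ((lam * p : ℝ) : ℂ) := by push_cast; ring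
  rw [hcast]
  set a : ℝ := lam * p with ha
  have ha0 : 0 < a := mul_pos hl0 hp0
  have ha1 : a ≤ 1 := by nlinarith
  set z : ℂ := s ^ 2 with hz
  set x : ℝ := z.re with hx
  set y : ℝ := z.im with hy
  have hxy : x ^ 2 + y ^ 2 = 1 := by
    have h1 : ‖z‖ = 1 := by rw [hz, norm_pow, hs]; norm_num
    have h2 : Complex.normSq z = 1 := by
      rw [← Complex.sq_norm, h1]; norm_num
    rw [Complex.normSq_apply] at h2
    nlinarith [h2]
  clear_value z
  set w : ℂ := 1 + (a : ℂ) * z with hw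
  set u : ℂ := (1 - (a : ℂ) * z) * (1 + z) with hu
  have hx1 : x ≤ 1 := by nlinarith [sq_nonneg y]
  have hxm1 : -1 ≤ x := by nlinarith [sq_nonneg y]
  have hnn : 0 ≤ (1 - a) * (1 + 4 * a + a ^ 2 + (1 + a) ^ 2 * x - 2 * a * x ^ 2) := by
    have h3 : 1 + 4 * a + a ^ 2 + (1 + a) ^ 2 * x - 2 * a * x ^ 2
        = (x + 1) * (1 + 4 * a + a ^ 2 - 2 * a * x) := by ring
    rw [h3]
    have h4 : 0 ≤ 1 + 4 * a + a ^ 2 - 2 * a * x := by nlinarith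
    exact mul_nonneg (by linarith) (mul_nonneg (by linarith) h4)
  by_cases hw0 : w = 0
  · rw [hw0]
    norm_num
  · have hd : (0 : ℝ) < Complex.normSq w := by
      rcases lt_or_eq_of_le (Complex.normSq_nonneg w) with h | h
      · exact h
      · exact absurd (Complex.normSq_eq_zero.mp h.symm) hw0
    have hconj : (starRingEnd ℂ) w ≠ 0 := by simpa using hw0
    have hsq : ((Complex.normSq w : ℝ) : ℂ) ^ 2 = w ^ 2 * ((starRingEnd ℂ) w) ^ 2 := by
      rw [← Complex.mul_conj]; ring
    have h1 : u / w ^ 2 = u * ((starRingEnd ℂ) w) ^ 2 / ((Complex.normSq w : ℝ) : ℂ) ^ 2 := by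
      rw [hsq, mul_div_mul_right _ _ (pow_ne_zero 2 hconj)]
    have h2 : (u / w ^ 2).re = (u * ((starRingEnd ℂ) w) ^ 2).re / (Complex.normSq w) ^ 2 := by
      rw [h1,
        show ((Complex.normSq w : ℝ) : ℂ) ^ 2 = ((Complex.normSq w ^ 2 : ℝ) : ℂ) by push_cast; ring,
        Complex.div_ofReal_re]
    have hnormw : ‖w‖ ^ 4 = (Complex.normSq w) ^ 2 := by
      rw [show (4 : ℕ) = 2 * 2 by norm_num, pow_mul, Complex.sq_norm]
    have hnum : (u * ((starRingEnd ℂ) w) ^ 2).re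
        = (1 - a) * (1 + 4 * a + a ^ 2 + (1 + a) ^ 2 * x - 2 * a * x ^ 2) := by
      simp only [hu, hw, Complex.mul_re, Complex.mul_im, Complex.add_re, Complex.add_im,
        Complex.sub_re, Complex.sub_im, Complex.one_re, Complex.one_im,
        Complex.ofReal_re, Complex.ofReal_im, Complex.conj_re, Complex.conj_im,
        pow_two, ← hx, ← hy]
      ring_nf
      linear_combination (3 * a - 3 * a ^ 2 - a ^ 2 * x - a ^ 3 - a ^ 3 * x
        - a ^ 3 * x ^ 2 - a ^ 3 * y ^ 2) * hxy
    constructor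
    · rw [h2, hnum, hnormw, ha]
      ring
    · rw [h2, hnum]
      exact div_nonneg hnn (by positivity)
end

section
/- Let v(a) = 1/a − ((1−a²)/a²)·log(1+a) on (0,1] with v(0) = 1/2. Then v is strictly increasing on [0,1], with v'(a) > v'(1) = 2·log 2 − 1 > 0 for a ∈ [0,1), and 1/2 ≤ v(a) ≤ 1 for all a ∈ [0,1]. -/
open Set Filter Real Topology

-- derivative of the formula at a > 0
lemma formula_deriv (a : ℝ) (ha : 0 < a) :
    HasDerivAt (fun x : ℝ => 1 / x - ((1 - x ^ 2) / x ^ 2) * Real.log (1 + x))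
      ((a ^ 2 - 2 * a + 2 * Real.log (1 + a)) / a ^ 3) a := by
  have ha' : a ≠ 0 := ne_of_gt ha
  have h1a : (0:ℝ) < 1 + a := by linarith
  have hL : HasDerivAt (fun x : ℝ => Real.log (1 + x)) (1 / (1 + a)) a := by
    simpa using ((hasDerivAt_id a).const_add 1).log h1a.ne'
  have hq : HasDerivAt (fun x : ℝ => (1 - x ^ 2) / x ^ 2)
      ((-(2 * a ^ 1) * a ^ 2 - (1 - a ^ 2) * (2 * a ^ 1)) / (a ^ 2) ^ 2) a := by
    exact ((hasDerivAt_pow 2 a).const_sub 1).div (by simpa using hasDerivAt_pow 2 a)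
      (pow_ne_zero 2 ha')
  have hinv : HasDerivAt (fun x : ℝ => 1 / x) (-(a ^ 2)⁻¹) a := by
    simpa [one_div] using hasDerivAt_inv ha'
  have := hinv.sub (hq.mul hL)
  refine this.congr_deriv ?_
  field_simp
  ring

lemma g_deriv (x : ℝ) (hx : 0 < 1 + x) :
    HasDerivAt (fun a : ℝ => a ^ 2 - 2 * a + 2 * Real.log (1 + a))
      (2 * x - 2 + 2 * (1 / (1 + x))) x := by
  have hL : HasDerivAt (fun a : ℝ => Real.log (1 + a)) (1 / (1 + x)) x := by
    simpa using ((hasDerivAt_id x).const_add 1).log hx.ne'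
  have h1 : HasDerivAt (fun a : ℝ => a ^ 2) (2 * x) x := by simpa using hasDerivAt_pow 2 x
  have h2 : HasDerivAt (fun a : ℝ => 2 * a) 2 x := by simpa using (hasDerivAt_id x).const_mul 2
  exact (h1.sub h2).add (hL.const_mul 2)

lemma g_cont : ContinuousOn (fun a : ℝ => a ^ 2 - 2 * a + 2 * Real.log (1 + a)) (Icc 0 1) := by
  intro x hx
  have : (0:ℝ) < 1 + x := by linarith [hx.1]
  exact ((g_deriv x this).continuousAt).continuousWithinAt

lemma g_pos : ∀ a ∈ Set.Ioc (0:ℝ) 1, 0 < a ^ 2 - 2 * a + 2 * Real.log (1 + a) := by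
  have hmono : StrictMonoOn (fun a : ℝ => a ^ 2 - 2 * a + 2 * Real.log (1 + a)) (Icc 0 1) := by
    apply strictMonoOn_of_deriv_pos (convex_Icc 0 1) g_cont
    intro x hx
    rw [interior_Icc] at hx
    have h1x : (0:ℝ) < 1 + x := by linarith [hx.1]
    rw [(g_deriv x h1x).deriv]
    have : 2 * x - 2 + 2 * (1 / (1 + x)) = 2 * x ^ 2 / (1 + x) := by field_simp; ring
    rw [this]
    have hx1 := hx.1
    positivity
  intro a ha
  have h0 : (0:ℝ) ∈ Icc (0:ℝ) 1 := by norm_num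
  have h1 : a ∈ Icc (0:ℝ) 1 := ⟨ha.1.le, ha.2⟩
  have := hmono h0 h1 ha.1
  simpa using this

lemma k_neg : ∀ a ∈ Set.Ioc (0:ℝ) 1,
    2 * a ^ 3 / (1 + a) - 3 * (a ^ 2 - 2 * a + 2 * Real.log (1 + a)) < 0 := by
  have hd : ∀ x ∈ Icc (0:ℝ) 1, HasDerivAt
      (fun a : ℝ => 2 * a ^ 3 / (1 + a) - 3 * (a ^ 2 - 2 * a + 2 * Real.log (1 + a)))
      (-2 * x ^ 3 / (1 + x) ^ 2) x := by
    intro x hx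
    have h1x : (0:ℝ) < 1 + x := by linarith [hx.1]
    have h1 : HasDerivAt (fun a : ℝ => 2 * a ^ 3 / (1 + a))
        ((2 * (3 * x ^ 2) * (1 + x) - 2 * x ^ 3 * 1) / (1 + x) ^ 2) x := by
      have hn : HasDerivAt (fun a : ℝ => 2 * a ^ 3) (2 * (3 * x ^ 2)) x := by
        simpa using (hasDerivAt_pow 3 x).const_mul 2
      have hdnm : HasDerivAt (fun a : ℝ => 1 + a) 1 x := by
        simpa using (hasDerivAt_id x).const_add 1
      exact hn.div hdnm h1x.ne'
    have := h1.sub ((g_deriv x h1x).const_mul 3)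
    refine this.congr_deriv ?_
    field_simp
    ring
  have hanti : StrictAntiOn
      (fun a : ℝ => 2 * a ^ 3 / (1 + a) - 3 * (a ^ 2 - 2 * a + 2 * Real.log (1 + a)))
      (Icc 0 1) := by
    apply strictAntiOn_of_deriv_neg (convex_Icc 0 1)
    · intro x hx; exact ((hd x hx).continuousAt).continuousWithinAt
    · intro x hx
      rw [interior_Icc] at hx
      rw [(hd x ⟨hx.1.le, hx.2.le⟩).deriv]
      have h1x : (0:ℝ) < 1 + x := by linarith [hx.1]
      have : -2 * x ^ 3 / (1 + x) ^ 2 = -(2 * x ^ 3 / (1 + x) ^ 2) := by ring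
      rw [this]
      have hx1 := hx.1
      have : 0 < 2 * x ^ 3 / (1 + x) ^ 2 := by positivity
      linarith
  intro a ha
  have h0 : (0:ℝ) ∈ Icc (0:ℝ) 1 := by norm_num
  have h1 : a ∈ Icc (0:ℝ) 1 := ⟨ha.1.le, ha.2⟩
  have := hanti h0 h1 ha.1
  simpa using this

lemma h_anti : StrictAntiOn
    (fun a : ℝ => (a ^ 2 - 2 * a + 2 * Real.log (1 + a)) / a ^ 3) (Set.Ioc 0 1) := by
  have hd : ∀ x ∈ Set.Ioo (0:ℝ) 1, HasDerivAt
      (fun a : ℝ => (a ^ 2 - 2 * a + 2 * Real.log (1 + a)) / a ^ 3)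
      ((2 * x ^ 3 / (1 + x) - 3 * (x ^ 2 - 2 * x + 2 * Real.log (1 + x))) / x ^ 4) x := by
    intro x hx
    have h1x : (0:ℝ) < 1 + x := by linarith [hx.1]
    have h3 : HasDerivAt (fun a : ℝ => a ^ 3) (3 * x ^ 2) x := by
      simpa using hasDerivAt_pow 3 x
    have hx0 : x ≠ 0 := hx.1.ne'
    have h1x0 : (1 + x) ≠ 0 := h1x.ne'
    have := (g_deriv x h1x).div h3 (pow_ne_zero 3 hx0)
    refine this.congr_deriv ?_
    field_simp
    ring
  apply strictAntiOn_of_deriv_neg (convex_Ioc 0 1)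
  · intro x hx
    rcases eq_or_lt_of_le hx.2 with h | h
    · -- x = 1 : continuous at 1 directly
      have h1x : (0:ℝ) < 1 + x := by linarith [hx.1]
      have : ContinuousAt (fun a : ℝ => (a ^ 2 - 2 * a + 2 * Real.log (1 + a)) / a ^ 3) x := by
        apply ContinuousAt.div
        · exact ((g_deriv x h1x).continuousAt)
        · fun_prop
        · exact pow_ne_zero 3 hx.1.ne'
      exact this.continuousWithinAt
    · exact ((hd x ⟨hx.1, h⟩).continuousAt).continuousWithinAt
  · intro x hx
    rw [interior_Ioc] at hx
    rw [(hd x hx).deriv]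
    apply div_neg_of_neg_of_pos
    · exact k_neg x ⟨hx.1, hx.2.le⟩
    · have hx1 := hx.1
      positivity

lemma log_taylor3 (x : ℝ) (hx : |x| ≤ 1/2) :
    |Real.log (1 + x) - (x - x ^ 2 / 2 + x ^ 3 / 3)| ≤ 2 * x ^ 4 := by
  have h1 : |(-x : ℝ)| < 1 := by rw [abs_neg]; linarith
  have := Real.abs_log_sub_add_sum_range_le h1 3
  have hsum : (∑ i ∈ Finset.range 3, (-x) ^ (i + 1) / (i + 1)) =
      -(x - x ^ 2 / 2 + x ^ 3 / 3) := by
    simp [Finset.sum_range_succ]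
    ring
  rw [hsum, abs_neg] at this
  have h2 : |x| ^ (3 + 1) / (1 - |x|) ≤ 2 * x ^ 4 := by
    have hx0 : (0:ℝ) ≤ |x| := abs_nonneg x
    have h3 : |x| ^ 4 = x ^ 4 := by
      rw [← abs_pow]
      exact abs_of_nonneg (by positivity)
    rw [h3]
    rw [div_le_iff₀ (by linarith)]
    nlinarith [pow_nonneg (abs_nonneg x) 4, sq_nonneg x]
  calc |Real.log (1 + x) - (x - x ^ 2 / 2 + x ^ 3 / 3)|
      = |-(x - x ^ 2 / 2 + x ^ 3 / 3) + Real.log (1 - -x)| := by ring_nf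
    _ ≤ |x| ^ (3 + 1) / (1 - |x|) := this
    _ ≤ 2 * x ^ 4 := h2

lemma v_hasDerivAt_zero (v : ℝ → ℝ) (hv0 : v 0 = 1 / 2)
    (hv : ∀ a : ℝ, a ≠ 0 → v a = 1 / a - ((1 - a ^ 2) / a ^ 2) * Real.log (1 + a)) :
    HasDerivAt v (2/3) 0 := by
  rw [hasDerivAt_iff_tendsto_slope]
  have key : ∀ x : ℝ, x ≠ 0 → |x| ≤ 1/2 → |slope v 0 x - 2/3| ≤ 3 * |x| := by
    intro x hx0 hx
    have hE := log_taylor3 x hx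
    set E := Real.log (1 + x) - (x - x ^ 2 / 2 + x ^ 3 / 3) with hEdef
    clear_value E
    have hL : Real.log (1 + x) = (x - x ^ 2 / 2 + x ^ 3 / 3) + E := by rw [hEdef]; ring
    have hslope : slope v 0 x - 2/3 =
        (-x ^ 4 / 2 + x ^ 5 / 3 - (1 - x ^ 2) * E) / x ^ 3 := by
      rw [slope_def_field, hv x hx0, hv0, hL]
      field_simp
      ring
    rw [hslope]
    rw [abs_div]
    have hxp : (0:ℝ) < |x| := abs_pos.mpr hx0
    have h3 : |x ^ 3| = |x| ^ 3 := abs_pow x 3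
    rw [h3, div_le_iff₀ (by positivity)]
    have hbound : |(-x ^ 4 / 2 + x ^ 5 / 3 - (1 - x ^ 2) * E)| ≤ 3 * x ^ 4 := by
      have hE2 := abs_le.mp hE
      have hx2 : x ^ 2 ≤ 1/4 := by nlinarith [sq_abs x]
      have hx4 : (0:ℝ) ≤ x ^ 4 := by positivity
      have h5 : |x ^ 5| ≤ x ^ 4 / 2 := by
        have : |x ^ 5| = |x| * x ^ 4 := by
          rw [show x ^ 5 = x * x ^ 4 by ring, abs_mul, abs_of_nonneg hx4]
        rw [this]
        nlinarith
      have h5' := abs_le.mp h5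
      have hprod : |(1 - x ^ 2) * E| ≤ 2 * x ^ 4 := by
        rw [abs_mul]
        have h1 : |1 - x ^ 2| ≤ 1 := by rw [abs_le]; constructor <;> nlinarith
        calc |1 - x ^ 2| * |E| ≤ 1 * |E| :=
              mul_le_mul_of_nonneg_right h1 (abs_nonneg E)
          _ ≤ 2 * x ^ 4 := by rw [one_mul]; exact hE
      have hprod' := abs_le.mp hprod
      rw [abs_le]
      constructor <;> linarith [hprod'.1, hprod'.2, h5'.1, h5'.2]
    have h4 : x ^ 4 = |x| ^ 4 := by rw [← abs_pow]; exact (abs_of_nonneg (by positivity)).symm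
    calc |(-x ^ 4 / 2 + x ^ 5 / 3 - (1 - x ^ 2) * E)| ≤ 3 * x ^ 4 := hbound
      _ = 3 * |x| * |x| ^ 3 := by rw [h4]; ring
  have hev : ∀ᶠ x in 𝓝[≠] (0:ℝ), |slope v 0 x - 2/3| ≤ 3 * |x| := by
    have hmem : Set.Ioo (-(1/2):ℝ) (1/2) ∈ 𝓝 (0:ℝ) := Ioo_mem_nhds (by norm_num) (by norm_num)
    filter_upwards [self_mem_nhdsWithin, eventually_nhdsWithin_of_eventually_nhds
      (eventually_of_mem hmem (fun x hx => hx))] with x hx0 hx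
    exact key x hx0 (by rw [abs_le]; exact ⟨hx.1.le, hx.2.le⟩)
  have h3t : Tendsto (fun x : ℝ => 3 * |x|) (𝓝[≠] (0:ℝ)) (𝓝 0) := by
    have : Tendsto (fun x : ℝ => 3 * |x|) (𝓝 (0:ℝ)) (𝓝 (3 * |(0:ℝ)|)) :=
      (continuous_const.mul continuous_abs).tendsto 0
    simpa using this.mono_left nhdsWithin_le_nhds
  rw [tendsto_iff_dist_tendsto_zero]
  apply squeeze_zero' (Eventually.of_forall fun x => dist_nonneg) _ h3t
  filter_upwards [hev] with x hx
  rwa [Real.dist_eq]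

/-- With `v(a) = 1/a − ((1−a²)/a²)log(1+a)` on `(0,1]` and `v(0) = 1/2`, `v` is strictly
increasing on `[0,1]`, `v'(1) = 2 log 2 − 1 > 0`, `v'(a) > v'(1)` for `a ∈ [0,1)`, and
`1/2 ≤ v(a) ≤ 1` on `[0,1]`. -/
theorem stmt_10 (v : ℝ → ℝ)
    (hv0 : v 0 = 1 / 2)
    (hv : ∀ a : ℝ, a ≠ 0 → v a = 1 / a - ((1 - a ^ 2) / a ^ 2) * Real.log (1 + a)) :
    StrictMonoOn v (Set.Icc (0 : ℝ) 1) ∧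
    deriv v 1 = 2 * Real.log 2 - 1 ∧ 0 < 2 * Real.log 2 - 1 ∧
    (∀ a ∈ Set.Ico (0 : ℝ) 1, 2 * Real.log 2 - 1 < deriv v a) ∧
    (∀ a ∈ Set.Icc (0 : ℝ) 1, 1 / 2 ≤ v a ∧ v a ≤ 1) := by
  -- derivative of v at positive points
  have hvd : ∀ a : ℝ, 0 < a →
      HasDerivAt v ((a ^ 2 - 2 * a + 2 * Real.log (1 + a)) / a ^ 3) a := by
    intro a ha
    apply (formula_deriv a ha).congr_of_eventuallyEq
    filter_upwards [eventually_ne_nhds ha.ne'] with x hx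
    exact hv x hx
  have hd0 : HasDerivAt v (2/3) 0 := v_hasDerivAt_zero v hv0 hv
  have hderiv : ∀ a : ℝ, 0 < a →
      deriv v a = (a ^ 2 - 2 * a + 2 * Real.log (1 + a)) / a ^ 3 := fun a ha => (hvd a ha).deriv
  have hlog2 : Real.log 2 < 0.6931471808 := Real.log_two_lt_d9
  have hlog2' : 0.6931471803 < Real.log 2 := Real.log_two_gt_d9
  have hd1 : deriv v 1 = 2 * Real.log 2 - 1 := by
    rw [hderiv 1 one_pos]
    norm_num
    ring
  -- continuity on [0,1]
  have hcont : ContinuousOn v (Set.Icc (0:ℝ) 1) := by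
    intro x hx
    rcases eq_or_lt_of_le hx.1 with h | h
    · exact (h ▸ hd0.continuousAt).continuousWithinAt
    · exact ((hvd x h).continuousAt).continuousWithinAt
  have hmono : StrictMonoOn v (Set.Icc (0:ℝ) 1) := by
    apply strictMonoOn_of_deriv_pos (convex_Icc 0 1) hcont
    intro x hx
    rw [interior_Icc] at hx
    rw [hderiv x hx.1]
    have hx1 := hx.1
    exact div_pos (g_pos x ⟨hx.1, hx.2.le⟩) (by positivity)
  refine ⟨hmono, hd1, by nlinarith, ?_, ?_⟩
  · intro a ha
    rcases eq_or_lt_of_le ha.1 with h | h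
    · rw [← h, hd0.deriv]
      nlinarith
    · rw [hderiv a h]
      have h1 : (1:ℝ) ∈ Set.Ioc (0:ℝ) 1 := by norm_num
      have := h_anti ⟨h, ha.2.le⟩ h1 ha.2
      simp only at this
      calc 2 * Real.log 2 - 1
          = (1 ^ 2 - 2 * 1 + 2 * Real.log (1 + 1)) / 1 ^ 3 := by
            rw [show (1:ℝ) + 1 = 2 by norm_num]
            ring
        _ < (a ^ 2 - 2 * a + 2 * Real.log (1 + a)) / a ^ 3 := this
  · intro a ha
    have hv1 : v 1 = 1 := by rw [hv 1 one_ne_zero]; norm_num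
    constructor
    · rcases eq_or_lt_of_le ha.1 with h | h
      · rw [← h, hv0]
      · have := hmono (by norm_num : (0:ℝ) ∈ Set.Icc (0:ℝ) 1) ha h
        rw [hv0] at this
        linarith
    · rcases eq_or_lt_of_le ha.2 with h | h
      · rw [h, hv1]
      · have := hmono ha (by norm_num : (1:ℝ) ∈ Set.Icc (0:ℝ) 1) h
        rw [hv1] at this
        linarith
end

section
/- For every λ with 0 < λ < (3 − 4 log 2)/(4 log 2 − 2), there exists a ∈ (0,1) such that 1 + λ(2v(a) − a) + λ²·v(a)² > 1 + λ + λ², where v(a) = 1/a − ((1−a²)/a²)log(1+a). Consequently the coefficient bound |a₃| ≤ 1 + λ + λ² fails for some f ∈ 𝒰(λ). -/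
open Complex Metric

namespace S11

noncomputable def psi (a : ℝ) (z : ℂ) : ℂ := (z + a)/(1 + a*z)
noncomputable def Pf (a : ℝ) (z : ℂ) : ℂ :=
  z/(a:ℂ) - ((1-(a:ℂ)^2)/(a:ℂ)^2) * Complex.log (1 + a*z)

variable {a lam vv : ℝ}

lemma re_pos (ha0 : 0 < a) (ha1 : a < 1) {w : ℂ} (hw : ‖w‖ ≤ 1) : 0 < (1 + (a:ℂ)*w).re := by
  have hre : |w.re| ≤ 1 := le_trans (Complex.abs_re_le_norm w) hw
  have h : (1 + (a:ℂ)*w).re = 1 + a*w.re := by simp [Complex.add_re, Complex.mul_re]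
  rw [h]
  rcases abs_le.mp hre with ⟨h1, h2⟩
  nlinarith

lemma slit (ha0 : 0 < a) (ha1 : a < 1) {w : ℂ} (hw : ‖w‖ ≤ 1) : 1 + (a:ℂ)*w ∈ slitPlane := by
  rw [Complex.mem_slitPlane_iff]; exact Or.inl (re_pos ha0 ha1 hw)

lemma den_ne (ha0 : 0 < a) (ha1 : a < 1) {w : ℂ} (hw : ‖w‖ ≤ 1) : 1 + (a:ℂ)*w ≠ 0 := by
  intro h
  have := re_pos ha0 ha1 hw
  rw [h] at this; simp at this

lemma normSq_diff (ha0 : 0 < a) (w : ℂ) :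
    Complex.normSq (1 + (a:ℂ)*w) - Complex.normSq (w + a) = (1-a^2)*(1 - Complex.normSq w) := by
  simp [Complex.normSq_apply, Complex.add_re, Complex.add_im, Complex.mul_re, Complex.mul_im]
  ring

lemma norm_psi_le (ha0 : 0 < a) (ha1 : a < 1) {w : ℂ} (hw : ‖w‖ ≤ 1) : ‖psi a w‖ ≤ 1 := by
  rw [psi, norm_div]
  have hd : 0 < ‖(1 + (a:ℂ)*w)‖ := norm_pos_iff.mpr (den_ne ha0 ha1 hw)
  rw [div_le_one hd]
  have e : ∀ u : ℂ, ‖u‖^2 = Complex.normSq u := fun u => by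
    rw [Complex.sq_norm]
  have hw2 : Complex.normSq w ≤ 1 := by
    rw [← e w]; nlinarith [norm_nonneg w]
  have h1 : ‖w + (a:ℂ)‖^2 ≤ ‖1 + (a:ℂ)*w‖^2 := by
    rw [e, e]
    nlinarith [normSq_diff ha0 w,
      mul_nonneg (by nlinarith : (0:ℝ) ≤ 1-a^2) (by linarith : (0:ℝ) ≤ 1 - Complex.normSq w)]
  nlinarith [norm_nonneg (w + (a:ℂ)), norm_nonneg (1 + (a:ℂ)*w)]

lemma norm_psi_lt (ha0 : 0 < a) (ha1 : a < 1) {w : ℂ} (hw : ‖w‖ < 1) : ‖psi a w‖ < 1 := by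
  rw [psi, norm_div]
  have hd : 0 < ‖(1 + (a:ℂ)*w)‖ := norm_pos_iff.mpr (den_ne ha0 ha1 hw.le)
  rw [div_lt_one hd]
  have e : ∀ u : ℂ, ‖u‖^2 = Complex.normSq u := fun u => by
    rw [Complex.sq_norm]
  have hw2 : Complex.normSq w < 1 := by
    rw [← e w]; nlinarith [norm_nonneg w]
  have h1 : ‖w + (a:ℂ)‖^2 < ‖1 + (a:ℂ)*w‖^2 := by
    rw [e, e]
    nlinarith [normSq_diff ha0 w,
      mul_pos (by nlinarith : (0:ℝ) < 1-a^2) (by linarith : (0:ℝ) < 1 - Complex.normSq w)]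
  nlinarith [norm_nonneg (w + (a:ℂ)), norm_nonneg (1 + (a:ℂ)*w)]

lemma hasDerivAt_P (ha0 : 0 < a) (ha1 : a < 1) {z : ℂ} (hz : ‖z‖ ≤ 1) :
    HasDerivAt (Pf a) (psi a z) z := by
  have hane : (a:ℂ) ≠ 0 := by
    simpa using ne_of_gt ha0
  have hne : 1 + (a:ℂ)*z ≠ 0 := den_ne ha0 ha1 hz
  have h1 : HasDerivAt (fun z : ℂ => 1 + (a:ℂ)*z) a z := by
    simpa using ((hasDerivAt_id z).const_mul (a:ℂ)).const_add 1
  have hlog : HasDerivAt (fun z : ℂ => Complex.log (1 + (a:ℂ)*z)) ((1 + (a:ℂ)*z)⁻¹ * a) z :=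
    ((Complex.hasDerivAt_log (slit ha0 ha1 hz)).comp z h1 :)
  have h2 : HasDerivAt (Pf a)
      (1/(a:ℂ) - ((1-(a:ℂ)^2)/(a:ℂ)^2) * ((1 + (a:ℂ)*z)⁻¹ * a)) z := by
    have := ((hasDerivAt_id z).div_const (a:ℂ)).sub (hlog.const_mul ((1-(a:ℂ)^2)/(a:ℂ)^2))
    exact this
  refine h2.congr_deriv (Eq.symm ?_)
  rw [psi]
  push_cast
  field_simp [hne, show 1 + z*(a:ℂ) ≠ 0 by rwa [mul_comm]]
  ring

lemma P_one (ha0 : 0 < a) (hv1 : vv = 1/a - ((1-a^2)/a^2)*Real.log (1+a)) :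
    Pf a 1 = (vv:ℂ) := by
  have h : Complex.log (1 + (a:ℂ)*1) = ((Real.log (1+a) : ℝ) : ℂ) := by
    rw [mul_one, show (1:ℂ) + (a:ℂ) = ((1+a : ℝ):ℂ) by push_cast; ring,
      Complex.ofReal_log (by linarith)]
  rw [Pf, h, hv1]
  push_cast
  ring

lemma key_bound (ha0 : 0 < a) (ha1 : a < 1) {z : ℂ} (hz : ‖z‖ ≤ 1) :
    ‖Pf a 1 - Pf a z‖ ≤ ‖1 - z‖ := by
  set w : ℝ → ℂ := fun t => z + t*(1-z) with hw
  have hwnorm : ∀ t ∈ Set.Icc (0:ℝ) 1, ‖w t‖ ≤ 1 := by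
    intro t ht
    have : w t = (1-(t:ℂ))*z + t := by rw [hw]; push_cast; ring
    rw [this]
    calc ‖(1-(t:ℂ))*z + t‖ ≤ ‖(1-(t:ℂ))*z‖ + ‖(t:ℂ)‖ := norm_add_le _ _
      _ = (1-t)*‖z‖ + t := by
          have e1 : ‖(1:ℂ)-(t:ℂ)‖ = 1-t := by
            rw [show (1:ℂ)-(t:ℂ) = ((1-t:ℝ):ℂ) by push_cast; ring, Complex.norm_real,
              Real.norm_eq_abs, _root_.abs_of_nonneg (by linarith [ht.2] : (0:ℝ) ≤ 1-t)]
          have e2 : ‖(t:ℂ)‖ = t := by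
            rw [Complex.norm_real, Real.norm_eq_abs, _root_.abs_of_nonneg ht.1]
          rw [norm_mul, e1, e2]
      _ ≤ (1-t)*1 + t := by nlinarith [ht.1, ht.2]
      _ = 1 := by ring
  have hderiv : ∀ t ∈ Set.uIcc (0:ℝ) 1,
      HasDerivAt (fun t : ℝ => Pf a (w t)) ((1-z) * psi a (w t)) t := by
    intro t ht
    rw [Set.uIcc_of_le (by norm_num : (0:ℝ) ≤ 1)] at ht
    have hin : HasDerivAt (fun u : ℂ => Pf a (z + u*(1-z))) (psi a (w t) * (1-z)) (t:ℂ) := by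
      have h1 : HasDerivAt (fun u : ℂ => z + u*(1-z)) (1-z) (t:ℂ) := by
        simpa using ((hasDerivAt_id (t:ℂ)).mul_const (1-z)).const_add z
      exact (hasDerivAt_P ha0 ha1 (hwnorm t ht)).comp (t:ℂ) h1
    have := hin.comp_ofReal
    simpa [mul_comm, hw] using this
  have hcont : ContinuousOn (fun t : ℝ => (1-z) * psi a (w t)) (Set.uIcc (0:ℝ) 1) := by
    apply ContinuousOn.mul continuousOn_const
    simp only [psi]
    apply ContinuousOn.div
    · fun_prop
    · fun_prop
    · intro t ht
      rw [Set.uIcc_of_le (by norm_num : (0:ℝ) ≤ 1)] at ht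
      exact den_ne ha0 ha1 (hwnorm t ht)
  have hInt : IntervalIntegrable (fun t : ℝ => (1-z) * psi a (w t))
      MeasureTheory.volume 0 1 := hcont.intervalIntegrable
  have hsub : (∫ t in (0:ℝ)..1, (1-z) * psi a (w t)) = Pf a (w 1) - Pf a (w 0) :=
    intervalIntegral.integral_eq_sub_of_hasDerivAt hderiv hInt
  have hw1 : w 1 = 1 := by rw [hw]; push_cast; ring
  have hw0 : w 0 = z := by rw [hw]; push_cast; ring
  have hfinal : Pf a 1 - Pf a z = ∫ t in (0:ℝ)..1, (1-z) * psi a (w t) := by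
    rw [hsub, hw1, hw0]
  rw [hfinal]
  calc ‖∫ t in (0:ℝ)..1, (1-z) * psi a (w t)‖ ≤ ‖1-z‖ * |1 - 0| := by
        apply intervalIntegral.norm_integral_le_of_norm_le_const
        intro t ht
        rw [Set.uIoc_of_le (by norm_num : (0:ℝ) ≤ 1)] at ht
        rw [norm_mul]
        have := norm_psi_le ha0 ha1 (hwnorm t ⟨ht.1.le, ht.2⟩)
        nlinarith [norm_nonneg (1-z), norm_nonneg (psi a (w t))]
    _ = ‖1-z‖ := by norm_num

noncomputable def gf (a lam vv : ℝ) (z : ℂ) : ℂ :=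
  1 - ((1 + lam*vv : ℝ):ℂ)*z + (lam:ℂ)*(z*Pf a z)

noncomputable def gd (a lam vv : ℝ) (z : ℂ) : ℂ :=
  -((1 + lam*vv : ℝ):ℂ) + (lam:ℂ)*(Pf a z + z * psi a z)

noncomputable def ff (a lam vv : ℝ) (z : ℂ) : ℂ := z / gf a lam vv z

lemma g_factor (z : ℂ) :
    gf a lam vv z = (1 - z) - (lam:ℂ)*z*((vv:ℂ) - Pf a z) := by
  rw [gf]; push_cast; ring

lemma g_ne (ha0 : 0 < a) (ha1 : a < 1) (hl0 : 0 < lam) (hl1 : lam < 1)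
    (hv1 : vv = 1/a - ((1-a^2)/a^2)*Real.log (1+a))
    {z : ℂ} (hz : ‖z‖ < 1) : gf a lam vv z ≠ 0 := by
  intro h
  rw [g_factor] at h
  have h2 : (1 - z) = (lam:ℂ)*z*((vv:ℂ) - Pf a z) := by linear_combination h
  have hkey : ‖(vv:ℂ) - Pf a z‖ ≤ ‖1 - z‖ := by
    rw [← P_one ha0 hv1]; exact key_bound ha0 ha1 hz.le
  have hz1 : z ≠ 1 := by intro h; rw [h] at hz; simp at hz
  have hpos : 0 < ‖(1:ℂ) - z‖ := by
    rw [norm_pos_iff]; intro h; apply hz1; linear_combination -h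
  have := congrArg norm h2
  rw [norm_mul, norm_mul, Complex.norm_real, Real.norm_eq_abs,
    _root_.abs_of_nonneg hl0.le] at this
  have h3 : lam*‖z‖ < 1 := by nlinarith [norm_nonneg z]
  have h4 : lam*‖z‖*‖(vv:ℂ) - Pf a z‖ ≤ lam*‖z‖*‖1 - z‖ := by
    nlinarith [mul_nonneg hl0.le (norm_nonneg z)]
  nlinarith [mul_pos (by linarith : (0:ℝ) < 1 - lam*‖z‖) hpos]

lemma hasDerivAt_g (ha0 : 0 < a) (ha1 : a < 1) {z : ℂ} (hz : ‖z‖ ≤ 1) :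
    HasDerivAt (gf a lam vv) (gd a lam vv z) z := by
  have hP := hasDerivAt_P ha0 ha1 hz
  have h1 := (hasDerivAt_id z).mul hP
  have H := (((hasDerivAt_id z).const_mul (((1 + lam*vv : ℝ)):ℂ)).const_sub 1).add
    (h1.const_mul (lam:ℂ))
  refine H.congr_deriv (Eq.symm ?_)
  rw [gd]; simp only [id_eq]; push_cast; ring

lemma g_sub (z : ℂ) : gf a lam vv z - z * gd a lam vv z = 1 - (lam:ℂ)*z^2*psi a z := by
  rw [gf, gd]; push_cast; ring

lemma hasDerivAt_f (ha0 : 0 < a) (ha1 : a < 1) (hl0 : 0 < lam) (hl1 : lam < 1)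
    (hv1 : vv = 1/a - ((1-a^2)/a^2)*Real.log (1+a))
    {z : ℂ} (hz : ‖z‖ < 1) :
    HasDerivAt (ff a lam vv) ((1 - (lam:ℂ)*z^2*psi a z)/(gf a lam vv z)^2) z := by
  have hg := hasDerivAt_g (lam := lam) (vv := vv) ha0 ha1 hz.le
  have hne := g_ne ha0 ha1 hl0 hl1 hv1 hz
  have H := (hasDerivAt_id z).div hg hne
  refine H.congr_deriv (Eq.symm ?_)
  rw [← g_sub (vv := vv)]; simp only [id_eq, one_mul]

noncomputable def psid (a : ℝ) (z : ℂ) : ℂ := (1-(a:ℂ)^2)/(1+a*z)^2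

lemma hasDerivAt_psi {z : ℂ} (h : 1+(a:ℂ)*z ≠ 0) : HasDerivAt (psi a) (psid a z) z := by
  have h1 : HasDerivAt (fun z : ℂ => z + (a:ℂ)) 1 z := by
    simpa using (hasDerivAt_id z).add_const (a:ℂ)
  have h2 : HasDerivAt (fun z : ℂ => 1 + (a:ℂ)*z) (a:ℂ) z := by
    simpa using ((hasDerivAt_id z).const_mul (a:ℂ)).const_add 1
  have H := h1.div h2 h
  refine H.congr_deriv (Eq.symm ?_)
  rw [psid]; field_simp; ring

lemma hasDerivAt_psid {z : ℂ} (h : 1+(a:ℂ)*z ≠ 0) :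
    HasDerivAt (psid a) (-2*(a:ℂ)*(1-(a:ℂ)^2)/(1+a*z)^3) z := by
  have h2 : HasDerivAt (fun z : ℂ => 1 + (a:ℂ)*z) (a:ℂ) z := by
    simpa using ((hasDerivAt_id z).const_mul (a:ℂ)).const_add 1
  have hpow := h2.pow 2
  have H := (hasDerivAt_const z (1-(a:ℂ)^2)).div hpow (pow_ne_zero 2 h)
  refine H.congr_deriv (Eq.symm ?_)
  simp only [Pi.pow_apply]
  field_simp
  ring

lemma hasDerivAt_gd (ha0 : 0 < a) (ha1 : a < 1) {z : ℂ} (hz : ‖z‖ ≤ 1) :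
    HasDerivAt (gd a lam vv) ((lam:ℂ)*(psi a z + (1*psi a z + z*psid a z))) z := by
  have hP := hasDerivAt_P ha0 ha1 hz
  have hpsi := hasDerivAt_psi (den_ne ha0 ha1 hz)
  have h1 := (hasDerivAt_id z).mul hpsi
  have H := ((hP.add h1).const_mul (lam:ℂ)).const_add (-((1 + lam*vv : ℝ):ℂ))
  exact H

noncomputable def f1 (a lam vv : ℝ) (z : ℂ) : ℂ :=
  (1 - (lam:ℂ)*z^2*psi a z)/(gf a lam vv z)^2

noncomputable def Nf (a lam vv : ℝ) (z : ℂ) : ℂ :=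
  (-(lam:ℂ)*(2*z*psi a z + z^2*psid a z))*(gf a lam vv z)
    - 2*(gd a lam vv z)*(1 - (lam:ℂ)*z^2*psi a z)

noncomputable def f2 (a lam vv : ℝ) (z : ℂ) : ℂ := Nf a lam vv z/(gf a lam vv z)^3

lemma hasDerivAt_u (ha0 : 0 < a) (ha1 : a < 1) {z : ℂ} (hz : ‖z‖ ≤ 1) :
    HasDerivAt (fun z : ℂ => 1 - (lam:ℂ)*z^2*psi a z)
      (-(lam:ℂ)*(2*z*psi a z + z^2*psid a z)) z := by
  have hpsi := hasDerivAt_psi (den_ne ha0 ha1 hz)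
  have h1 := (((hasDerivAt_pow 2 z).const_mul (lam:ℂ)).mul hpsi).const_sub 1
  refine h1.congr_deriv (Eq.symm ?_)
  push_cast
  ring

lemma hasDerivAt_f1 (ha0 : 0 < a) (ha1 : a < 1) (hl0 : 0 < lam) (hl1 : lam < 1)
    (hv1 : vv = 1/a - ((1-a^2)/a^2)*Real.log (1+a))
    {z : ℂ} (hz : ‖z‖ < 1) :
    HasDerivAt (f1 a lam vv) (f2 a lam vv z) z := by
  have hu := hasDerivAt_u (lam := lam) ha0 ha1 hz.le
  have hg := hasDerivAt_g (lam := lam) (vv := vv) ha0 ha1 hz.le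
  have hne := g_ne ha0 ha1 hl0 hl1 hv1 hz
  have H := hu.div (hg.pow 2) (pow_ne_zero 2 hne)
  refine H.congr_deriv (Eq.symm ?_)
  rw [f2, Nf]
  simp only [Pi.pow_apply]
  field_simp
  ring

lemma psi_zero : psi a 0 = (a:ℂ) := by rw [psi]; simp
lemma psid_zero : psid a 0 = 1-(a:ℂ)^2 := by rw [psid]; simp
lemma Pf_zero : Pf a 0 = 0 := by rw [Pf]; simp
lemma gf_zero : gf a lam vv 0 = 1 := by rw [gf, Pf_zero]; simp
lemma gd_zero : gd a lam vv 0 = -((1+lam*vv:ℝ):ℂ) := by rw [gd, Pf_zero, psi_zero]; simp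

lemma deriv_f2_zero (ha0 : 0 < a) (ha1 : a < 1) :
    deriv (f2 a lam vv) 0 = ((6*(1+lam*vv)^2 - 6*lam*a : ℝ):ℂ) := by
  have h0 : ‖(0:ℂ)‖ ≤ 1 := by simp
  have ne0 : 1 + (a:ℂ)*0 ≠ 0 := den_ne ha0 ha1 h0
  have hψ := hasDerivAt_psi (a := a) ne0
  have hψd := hasDerivAt_psid (a := a) ne0
  have hg := hasDerivAt_g (lam := lam) (vv := vv) ha0 ha1 h0
  have hgd := hasDerivAt_gd (lam := lam) (vv := vv) ha0 ha1 h0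
  have hu := hasDerivAt_u (lam := lam) ha0 ha1 h0
  have hA1 := ((hasDerivAt_id (0:ℂ)).const_mul (2:ℂ)).mul hψ
  have hA2 := (hasDerivAt_pow 2 (0:ℂ)).mul hψd
  have hA := (hA1.add hA2).const_mul (-(lam:ℂ))
  have hN := (hA.mul hg).sub ((hgd.const_mul 2).mul hu)
  have hf2 := hN.div (hg.pow 3)
    (show gf a lam vv 0 ^ 3 ≠ 0 by rw [gf_zero]; norm_num)
  have hf2' : HasDerivAt (f2 a lam vv) _ 0 := hf2
  rw [hf2'.deriv]
  simp only [Pi.mul_apply, Pi.add_apply, Pi.sub_apply, Pi.pow_apply, psi_zero, psid_zero, gf_zero, gd_zero, id_eq]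
  push_cast
  ring_nf

lemma ff_zero : ff a lam vv 0 = 0 := by rw [ff]; simp

lemma deriv_ff_zero (ha0 : 0 < a) (ha1 : a < 1) (hl0 : 0 < lam) (hl1 : lam < 1)
    (hv1 : vv = 1/a - ((1-a^2)/a^2)*Real.log (1+a)) :
    deriv (ff a lam vv) 0 = 1 := by
  have h := (hasDerivAt_f (lam := lam) (vv := vv) ha0 ha1 hl0 hl1 hv1
    (z := 0) (by simp)).deriv
  rw [h, gf_zero]
  simp

lemma main_diff (ha0 : 0 < a) (ha1 : a < 1) (hl0 : 0 < lam) (hl1 : lam < 1)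
    (hv1 : vv = 1/a - ((1-a^2)/a^2)*Real.log (1+a)) :
    DifferentiableOn ℂ (ff a lam vv) (ball (0:ℂ) 1) := by
  intro z hz
  exact (hasDerivAt_f ha0 ha1 hl0 hl1 hv1
    (mem_ball_zero_iff.mp hz)).differentiableAt.differentiableWithinAt

lemma main_cond (ha0 : 0 < a) (ha1 : a < 1) (hl0 : 0 < lam) (hl1 : lam < 1)
    (hv1 : vv = 1/a - ((1-a^2)/a^2)*Real.log (1+a)) :
    ∀ z ∈ ball (0:ℂ) 1, z ≠ 0 →
      ‖(z / ff a lam vv z)^2 * deriv (ff a lam vv) z - 1‖ < lam := by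
  intro z hz hz0
  have hz' : ‖z‖ < 1 := mem_ball_zero_iff.mp hz
  have hne := g_ne ha0 ha1 hl0 hl1 hv1 hz'
  rw [(hasDerivAt_f ha0 ha1 hl0 hl1 hv1 hz').deriv]
  have hfz : z / ff a lam vv z = gf a lam vv z := by
    rw [ff]; field_simp
  rw [hfz]
  have he : (gf a lam vv z)^2 * ((1 - (lam:ℂ)*z^2*psi a z)/(gf a lam vv z)^2) - 1
      = -((lam:ℂ)*z^2*psi a z) := by
    field_simp
    ring
  rw [he, norm_neg]
  rw [norm_mul, norm_mul, Complex.norm_real, Real.norm_eq_abs,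
    _root_.abs_of_nonneg hl0.le, norm_pow]
  have hψ := norm_psi_lt ha0 ha1 hz'
  have h1 : ‖z‖^2 ≤ 1 := by nlinarith [norm_nonneg z]
  have h2 : ‖z‖^2 * ‖psi a z‖ < 1 :=
    lt_of_le_of_lt (by nlinarith [norm_nonneg (psi a z)]) hψ
  calc lam * ‖z‖^2 * ‖psi a z‖ = lam * (‖z‖^2 * ‖psi a z‖) := by ring
    _ < lam*1 := by exact mul_lt_mul_of_pos_left h2 hl0
    _ = lam := mul_one lam

lemma main_iter (ha0 : 0 < a) (ha1 : a < 1) (hl0 : 0 < lam) (hl1 : lam < 1)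
    (hv1 : vv = 1/a - ((1-a^2)/a^2)*Real.log (1+a)) :
    iteratedDeriv 3 (ff a lam vv) 0 = ((6*(1+lam*vv)^2 - 6*lam*a : ℝ):ℂ) := by
  have E1 : deriv (ff a lam vv) =ᶠ[nhds (0:ℂ)] f1 a lam vv := by
    filter_upwards [ball_mem_nhds (0:ℂ) one_pos] with z hz
    exact (hasDerivAt_f ha0 ha1 hl0 hl1 hv1 (mem_ball_zero_iff.mp hz)).deriv
  have E2 : deriv (f1 a lam vv) =ᶠ[nhds (0:ℂ)] f2 a lam vv := by
    filter_upwards [ball_mem_nhds (0:ℂ) one_pos] with z hz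
    exact (hasDerivAt_f1 ha0 ha1 hl0 hl1 hv1 (mem_ball_zero_iff.mp hz)).deriv
  have E3 := ((E1.deriv.trans E2).deriv).eq_of_nhds
  have hiter : iteratedDeriv 3 (ff a lam vv) 0
      = deriv (deriv (deriv (ff a lam vv))) 0 := by
    simp [iteratedDeriv_succ, iteratedDeriv_zero]
  rw [hiter, E3, deriv_f2_zero ha0 ha1]

end S11



open Filter Topology

/-- For `0 < λ < (3 − 4 log 2)/(4 log 2 − 2)` there is `a ∈ (0,1)` with
`1 + λ(2v(a) − a) + λ²v(a)² > 1 + λ + λ²`; consequently the coefficient bound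
`|a₃| ≤ 1 + λ + λ²` fails for some `f ∈ 𝒰(λ)`. -/
theorem stmt_11 (v : ℝ → ℝ)
    (hv : ∀ a : ℝ, a ≠ 0 → v a = 1 / a - ((1 - a ^ 2) / a ^ 2) * Real.log (1 + a))
    (lam : ℝ) (hlam0 : 0 < lam)
    (hlam1 : lam < (3 - 4 * Real.log 2) / (4 * Real.log 2 - 2)) :
    (∃ a ∈ Set.Ioo (0 : ℝ) 1,
      1 + lam + lam ^ 2 < 1 + lam * (2 * v a - a) + lam ^ 2 * (v a) ^ 2) ∧
    ∃ f : ℂ → ℂ, DifferentiableOn ℂ f (ball (0 : ℂ) 1) ∧ f 0 = 0 ∧ deriv f 0 = 1 ∧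
      (∀ z ∈ ball (0 : ℂ) 1, z ≠ 0 → ‖(z / f z) ^ 2 * deriv f z - 1‖ < lam) ∧
      1 + lam + lam ^ 2 < ‖iteratedDeriv 3 f 0‖ / 6 := by
  have l2l := Real.log_two_gt_d9
  have l2u := Real.log_two_lt_d9
  set F : ℝ → ℝ := fun x => 1/x - ((1-x^2)/x^2)*Real.log (1+x) with hFdef
  have hd4 : (0:ℝ) < 4*Real.log 2 - 2 := by nlinarith
  have hlam_ub : lam*(4*Real.log 2 - 2) < 3 - 4*Real.log 2 := (lt_div_iff₀ hd4).mp hlam1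
  have hl1 : lam < 1 := by nlinarith
  have hF1 : F 1 = 1 := by rw [hFdef]; norm_num
  -- derivative of F at 1
  have hFd : HasDerivAt F (2*Real.log 2 - 1) 1 := by
    have h1 : HasDerivAt (fun x : ℝ => 1/x) (-1 : ℝ) 1 := by
      have := (hasDerivAt_const (1:ℝ) (1:ℝ)).div (hasDerivAt_id (1:ℝ)) one_ne_zero
      refine this.congr_deriv (Eq.symm ?_)
      norm_num
    have hnum : HasDerivAt (fun x : ℝ => 1 - x^2) (-2 : ℝ) 1 := by
      have := (hasDerivAt_pow 2 (1:ℝ)).const_sub 1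
      refine this.congr_deriv (Eq.symm ?_)
      norm_num
    have hden : HasDerivAt (fun x : ℝ => x^2) (2 : ℝ) 1 := by
      have := hasDerivAt_pow 2 (1:ℝ)
      refine this.congr_deriv (Eq.symm ?_)
      norm_num
    have h2 : HasDerivAt (fun x : ℝ => (1-x^2)/x^2) (-2 : ℝ) 1 := by
      have := hnum.div hden (by norm_num : (1:ℝ)^2 ≠ 0)
      refine this.congr_deriv (Eq.symm ?_)
      norm_num
    have h3 : HasDerivAt (fun x : ℝ => Real.log (1+x)) (1/2 : ℝ) 1 := by
      have hin : HasDerivAt (fun x : ℝ => 1 + x) (1:ℝ) 1 := by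
        simpa using (hasDerivAt_id (1:ℝ)).const_add 1
      have := (Real.hasDerivAt_log (by norm_num : (1:ℝ)+1 ≠ 0)).comp 1 hin
      refine this.congr_deriv (Eq.symm ?_)
      norm_num
    have := h1.sub (h2.mul h3)
    refine this.congr_deriv (Eq.symm ?_)
    norm_num
    ring
  -- slope limit
  have hslope : Tendsto (fun x => (1 - F x)/(1 - x)) (nhdsWithin 1 (Set.Iio 1))
      (nhds (2*Real.log 2 - 1)) := by
    have h := hasDerivAt_iff_tendsto_slope.mp hFd
    have hsub : Set.Iio (1:ℝ) ⊆ {(1:ℝ)}ᶜ := fun x hx => ne_of_lt hx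
    have h2 := h.mono_left (nhdsWithin_mono 1 hsub)
    have heq : (fun x => (1 - F x)/(1 - x)) = slope F 1 := by
      funext x
      rw [slope_def_field, hF1]
      rw [show (1:ℝ) - F x = -(F x - 1) by ring, show (1:ℝ) - x = -(x - 1) by ring,
        neg_div_neg_eq]
    rw [heq]
    exact h2
  have hFcont : Tendsto F (nhdsWithin 1 (Set.Iio 1)) (nhds 1) := by
    have := hFd.continuousAt.tendsto
    rw [hF1] at this
    exact this.mono_left nhdsWithin_le_nhds
  have hT : Tendsto (fun x => 1 - 2*((1 - F x)/(1 - x)) - lam*(((1 - F x)/(1 - x))*(1 + F x)))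
      (nhdsWithin 1 (Set.Iio 1))
      (nhds (1 - 2*(2*Real.log 2 - 1) - lam*((2*Real.log 2 - 1)*(1+1)))) :=
    (tendsto_const_nhds.sub (hslope.const_mul 2)).sub
      ((hslope.mul (tendsto_const_nhds.add hFcont)).const_mul lam)
  have hpos : 0 < 1 - 2*(2*Real.log 2 - 1) - lam*((2*Real.log 2 - 1)*(1+1)) := by nlinarith
  have hev1 := hT.eventually (eventually_gt_nhds hpos)
  have hev2 : ∀ᶠ x in nhdsWithin 1 (Set.Iio 1), x ∈ Set.Ioo (0:ℝ) 1 := by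
    have hmem : Set.Ioo (0:ℝ) 1 ∈ nhdsWithin 1 (Set.Iio 1) :=
      Ioo_mem_nhdsLT_of_mem (by norm_num : (1:ℝ) ∈ Set.Ioc 0 1)
    filter_upwards [hmem] with x hx
    exact hx
  obtain ⟨x, hx1, hx2⟩ := (hev1.and hev2).exists
  obtain ⟨hx0, hxlt⟩ := hx2
  have hva : v x = F x := hv x (ne_of_gt hx0)
  have h1a : (0:ℝ) < 1 - x := by linarith
  set φ := (1 - F x)/(1 - x) with hφdef
  have hphi : 1 - F x = φ*(1-x) := by
    rw [hφdef]; field_simp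
  -- the main gain inequality
  have hkey : 1 + lam*(2*F x - x) + lam^2*(F x)^2 - (1 + lam + lam^2)
      = lam*(1-x)*(1 - 2*φ - lam*(φ*(1 + F x))) := by
    linear_combination (-2*lam - lam^2*(1 + F x)) * hphi
  have hgain : 0 < lam*(1-x)*(1 - 2*φ - lam*(φ*(1 + F x))) :=
    mul_pos (mul_pos hlam0 h1a) hx1
  have goal1 : 1 + lam + lam^2 < 1 + lam*(2*F x - x) + lam^2*(F x)^2 := by linarith
  have goal2 : 1 + lam + lam^2 < (1 + lam*F x)^2 - lam*x := by nlinarith [hkey, hgain]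
  have hv1 : F x = 1/x - ((1-x^2)/x^2)*Real.log (1+x) := rfl
  constructor
  · exact ⟨x, ⟨hx0, hxlt⟩, by rw [hva]; exact goal1⟩
  · refine ⟨S11.ff x lam (F x), S11.main_diff hx0 hxlt hlam0 hl1 hv1,
      S11.ff_zero, S11.deriv_ff_zero hx0 hxlt hlam0 hl1 hv1,
      S11.main_cond hx0 hxlt hlam0 hl1 hv1, ?_⟩
    rw [S11.main_iter hx0 hxlt hlam0 hl1 hv1]
    have hpos2 : (0:ℝ) < 6*(1 + lam*F x)^2 - 6*lam*x := by nlinarith [goal2]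
    rw [Complex.norm_real, Real.norm_eq_abs, _root_.abs_of_nonneg hpos2.le]
    rw [show (6*(1 + lam*F x)^2 - 6*lam*x)/6 = (1 + lam*F x)^2 - lam*x by ring]
    exact goal2
end

section
/- Let rₙ = 1 − 2^{−4n}, θₙ = 2^{−n}, aₙ = rₙe^{iθₙ} for n ≥ 1. Then |1 − aₙ| ≥ (√15/(2π))·2^{−n} for all n ≥ 1, and consequently the series Σₙ (1 − |aₙ|)/|1 − aₙ| converges. -/
open Complex

lemma quad_aux {R T C P : ℝ} (h1 : 2 * T ^ 2 ≤ (1 - C) * P ^ 2)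
    (h2 : 15 / 16 ≤ R) (h3 : 0 ≤ 1 - C) (h4 : 0 ≤ R) :
    15 * T ^ 2 ≤ ((1 - R) ^ 2 + 2 * R * (1 - C)) * (4 * P ^ 2) := by
  nlinarith [mul_le_mul_of_nonneg_left h1 h4,
    mul_le_mul_of_nonneg_right h2 (sq_nonneg T),
    mul_nonneg (sq_nonneg (1 - R)) (sq_nonneg P),
    mul_le_mul_of_nonneg_left h3 (sub_nonneg.2 h2 : (0:ℝ) ≤ R - 15/16)]

lemma norm_one_sub_aux (r θ : ℝ) :
    ‖(1 : ℂ) - (r : ℂ) * Complex.exp (Complex.I * (θ : ℝ))‖ ^ 2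
      = (1 - r) ^ 2 + 2 * r * (1 - Real.cos θ) := by
  rw [Complex.sq_norm]
  simp [Complex.normSq_apply, Complex.exp_re, Complex.exp_im, Complex.mul_re, Complex.mul_im]
  have h := Real.sin_sq_add_cos_sq θ
  linear_combination r ^ 2 * h


set_option maxHeartbeats 1000000 in
/-- For `aₙ = (1 − 2^{−4n}) e^{i 2^{−n}}` (`n ≥ 1`): `|1 − aₙ| ≥ (√15/(2π)) 2^{−n}` and
`Σ (1 − |aₙ|)/|1 − aₙ|` converges. -/
theorem stmt_14 (a : ℕ → ℂ)
    (ha : ∀ n : ℕ, a n = ((1 - (1 / 2 : ℝ) ^ (4 * (n + 1)) : ℝ) : ℂ) *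
      Complex.exp (Complex.I * ((1 / 2 : ℝ) ^ (n + 1) : ℝ))) :
    (∀ n : ℕ, Real.sqrt 15 / (2 * Real.pi) * (1 / 2) ^ (n + 1) ≤ ‖1 - a n‖) ∧
    Summable (fun n : ℕ => (1 - ‖a n‖) / ‖1 - a n‖) := by
  have hπ := Real.pi_pos
  have hs : Real.sqrt 15 ^ 2 = 15 := Real.sq_sqrt (by norm_num)
  have hspos : (0:ℝ) < Real.sqrt 15 := Real.sqrt_pos.2 (by norm_num)
  -- abbreviations
  set θ : ℕ → ℝ := fun n => (1/2 : ℝ) ^ (n + 1) with hθ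
  set r : ℕ → ℝ := fun n => 1 - (1/2 : ℝ) ^ (4 * (n + 1)) with hr
  have hθpos : ∀ n, 0 < θ n := fun n => by positivity
  have hθle : ∀ n, θ n ≤ 1/2 := fun n => by
    calc θ n ≤ (1/2:ℝ)^1 := pow_le_pow_of_le_one (by norm_num) (by norm_num) (by omega)
    _ = 1/2 := by norm_num
  have hrlb : ∀ n, (15/16 : ℝ) ≤ r n := fun n => by
    have : (1/2:ℝ) ^ (4*(n+1)) ≤ (1/2:ℝ)^4 :=
      pow_le_pow_of_le_one (by norm_num) (by norm_num) (by omega)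
    simp only [hr]; norm_num at this ⊢; linarith
  have hrub : ∀ n, r n ≤ 1 := fun n => by
    have : (0:ℝ) < (1/2:ℝ) ^ (4*(n+1)) := by positivity
    simp only [hr]; linarith
  have key : ∀ n : ℕ, Real.sqrt 15 / (2 * Real.pi) * (1 / 2) ^ (n + 1) ≤ ‖1 - a n‖ := by
    intro n
    have habs : |θ n| ≤ Real.pi := by
      rw [abs_of_pos (hθpos n)]
      have := hθle n; linarith [Real.pi_gt_three]
    have hcos := Real.cos_le_one_sub_mul_cos_sq habs
    have hcos' : 2 * θ n ^ 2 ≤ (1 - Real.cos (θ n)) * Real.pi ^ 2 := by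
      have hπ2 : (0:ℝ) < Real.pi ^ 2 := by positivity
      have h2 : 2 / Real.pi ^ 2 * θ n ^ 2 * Real.pi ^ 2 = 2 * θ n ^ 2 := by
        field_simp
      nlinarith [hcos]
    have hnorm : ‖1 - a n‖ ^ 2 = (1 - r n) ^ 2 + 2 * r n * (1 - Real.cos (θ n)) := by
      rw [ha n]; exact norm_one_sub_aux (r n) (θ n)
    have h2 : (Real.sqrt 15 / (2 * Real.pi) * θ n) ^ 2 ≤ ‖1 - a n‖ ^ 2 := by
      rw [hnorm]
      have heq : (Real.sqrt 15 / (2 * Real.pi) * θ n) ^ 2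
          = 15 * θ n ^ 2 / (4 * Real.pi ^ 2) := by
        rw [div_mul_eq_mul_div, div_pow, mul_pow, mul_pow, hs]; ring
      rw [heq, div_le_iff₀ (by positivity)]
      have hcosnn : 0 ≤ 1 - Real.cos (θ n) := by
        nlinarith [Real.cos_le_one (θ n)]
      have hr0 : (0:ℝ) ≤ r n := le_trans (by norm_num) (hrlb n)
      exact quad_aux hcos' (hrlb n) hcosnn hr0
    calc Real.sqrt 15 / (2 * Real.pi) * θ n
        = Real.sqrt ((Real.sqrt 15 / (2 * Real.pi) * θ n) ^ 2) :=
          (Real.sqrt_sq (by positivity)).symm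
      _ ≤ Real.sqrt (‖1 - a n‖ ^ 2) := Real.sqrt_le_sqrt h2
      _ = ‖1 - a n‖ := Real.sqrt_sq (norm_nonneg _)
  refine ⟨key, ?_⟩
  have hna : ∀ n, ‖a n‖ = r n := by
    intro n
    rw [ha n, norm_mul]
    have h2 : ‖Complex.exp (Complex.I * (((1/2:ℝ)^(n+1) : ℝ) : ℂ))‖ = 1 := by
      rw [Complex.norm_exp]
      simp only [Complex.mul_re, Complex.I_re, Complex.I_im, Complex.ofReal_re,
        Complex.ofReal_im]
      norm_num
    have h0 : (0:ℝ) ≤ 1 - (1/2:ℝ)^(4*(n+1)) := by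
      have := pow_le_one₀ (by norm_num : (0:ℝ) ≤ 1/2) (by norm_num : (1/2:ℝ) ≤ 1)
        (n := 4*(n+1))
      linarith
    rw [h2, mul_one, Complex.norm_real, Real.norm_eq_abs, _root_.abs_of_nonneg h0]
  have hpos : ∀ n, 0 < ‖1 - a n‖ := fun n =>
    lt_of_lt_of_le (by positivity) (key n)
  apply Summable.of_nonneg_of_le
    (fun n => div_nonneg (by rw [hna n]; linarith [hrub n]) (hpos n).le)
    (f := fun n => 2 * Real.pi / Real.sqrt 15 * (1/8 : ℝ) ^ (n + 1))
  · intro n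
    have h1 := key n
    have hlb : (0:ℝ) < Real.sqrt 15 / (2 * Real.pi) * (1/2) ^ (n+1) := by positivity
    calc (1 - ‖a n‖) / ‖1 - a n‖
        = (1/2:ℝ) ^ (4*(n+1)) / ‖1 - a n‖ := by rw [hna n]; simp only [hr]; ring_nf
      _ ≤ (1/2:ℝ) ^ (4*(n+1)) / (Real.sqrt 15 / (2 * Real.pi) * (1/2) ^ (n+1)) := by
          apply div_le_div_of_nonneg_left (by positivity) hlb h1
      _ = 2 * Real.pi / Real.sqrt 15 * (1/8 : ℝ) ^ (n + 1) := by
          have hp : ((1/8:ℝ)) ^ (n+1) * (1/2:ℝ) ^ (n+1) = (1/2:ℝ) ^ (4*(n+1)) := by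
            rw [show (1/8:ℝ) = (1/2)^3 by norm_num, ← pow_mul, ← pow_add]; ring_nf
          rw [← hp]
          field_simp
  · have hg : Summable fun n : ℕ => ((1/8 : ℝ)) ^ n :=
      summable_geometric_of_lt_one (by norm_num) (by norm_num)
    have := (hg.mul_left (2 * Real.pi / Real.sqrt 15 * (1/8)))
    apply this.congr
    intro n
    rw [pow_succ]
    ring
end

section
/- Let rₙ = 1 − 2^{−4n}, θₙ = 2^{−n}, aₙ = rₙe^{iθₙ}. Then Σₙ (1 − |aₙ|)/|1 − aₙ|² converges; indeed (1 − |aₙ|)/|1 − aₙ|² ≤ (π²/15)·2^{−(2n−2)} for all n ≥ 1. -/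
open Complex

/-- For `aₙ = (1 − 2^{−4n}) e^{i 2^{−n}}` (`n ≥ 1`):
`(1 − |aₙ|)/|1 − aₙ|² ≤ (π²/15) 2^{−(2n−2)}` and `Σ (1 − |aₙ|)/|1 − aₙ|²` converges. -/
theorem stmt_15 (a : ℕ → ℂ)
    (ha : ∀ n : ℕ, a n = ((1 - (1 / 2 : ℝ) ^ (4 * (n + 1)) : ℝ) : ℂ) *
      Complex.exp (Complex.I * ((1 / 2 : ℝ) ^ (n + 1) : ℝ))) :
    (∀ n : ℕ, (1 - ‖a n‖) / ‖1 - a n‖ ^ 2 ≤ Real.pi ^ 2 / 15 * (1 / 2) ^ (2 * (n + 1) - 2)) ∧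
    Summable (fun n : ℕ => (1 - ‖a n‖) / ‖1 - a n‖ ^ 2) := by
  have hπ : (3:ℝ) ≤ Real.pi := Real.pi_gt_three.le
  have key : ∀ n : ℕ, 1 - ‖a n‖ = ((1/2:ℝ)^(n+1))^4 ∧
      (225/256 : ℝ) * (1/2)^(n+1) ≤ ‖1 - a n‖ := by
    intro n
    set θ : ℝ := (1/2:ℝ)^(n+1) with hθ
    have hθpos : 0 < θ := by positivity
    have hθle : θ ≤ 1/2 := by
      calc θ ≤ (1/2:ℝ)^1 := pow_le_pow_of_le_one (by norm_num) (by norm_num) (by omega)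
      _ = 1/2 := pow_one _
    have hr4 : (1/2:ℝ)^(4*(n+1)) = θ^4 := by
      rw [hθ, ← pow_mul, Nat.mul_comm]
    have hθ4 : θ^4 ≤ 1/16 := by
      calc θ^4 ≤ (1/2:ℝ)^4 := pow_le_pow_left₀ hθpos.le hθle 4
        _ = 1/16 := by norm_num
    have h1 : (0:ℝ) ≤ 1 - θ^4 := by linarith
    have hae : a n = ((1 - θ^4 : ℝ) : ℂ) * (Complex.cos θ + Complex.sin θ * Complex.I) := by
      rw [ha n, hr4, mul_comm Complex.I, Complex.exp_mul_I]
    have hnorm : ‖a n‖ = 1 - θ^4 := by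
      rw [hae, norm_mul, Complex.norm_of_nonneg h1,
        Complex.norm_cos_add_sin_mul_I, mul_one]
    have him : (1 - a n).im = -((1 - θ^4) * Real.sin θ) := by
      rw [hae]
      simp only [Complex.sub_im, Complex.one_im, Complex.mul_im, Complex.mul_re,
        Complex.add_re, Complex.add_im, Complex.ofReal_re, Complex.ofReal_im,
        Complex.cos_ofReal_re, Complex.cos_ofReal_im, Complex.sin_ofReal_re,
        Complex.sin_ofReal_im, Complex.I_re, Complex.I_im]
      ring
    have hθ2 : θ^2 ≤ 1/4 := by nlinarith [hθpos.le, hθle]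
    have hsin : (15/16) * θ ≤ Real.sin θ := by
      have h := Real.sin_gt_sub_cube hθpos
      nlinarith [mul_le_mul_of_nonneg_left hθ2 hθpos.le]
    have hs0 : 0 ≤ (1 - θ^4) * Real.sin θ :=
      mul_nonneg h1 (le_trans (by positivity) hsin)
    have h2 : (1 - θ^4) * Real.sin θ ≤ ‖1 - a n‖ := by
      have h := Complex.abs_im_le_norm (1 - a n)
      rw [him, abs_neg, _root_.abs_of_nonneg hs0] at h
      exact h
    refine ⟨by rw [hnorm]; ring, ?_⟩
    calc (225/256:ℝ) * θ ≤ (1 - θ^4) * Real.sin θ := by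
          nlinarith [hsin, hθ4, hθpos.le, Real.sin_le_one θ]
      _ ≤ ‖1 - a n‖ := h2
  have hbound : ∀ n : ℕ, (1 - ‖a n‖) / ‖1 - a n‖ ^ 2 ≤ Real.pi ^ 2 / 15 * (1 / 2) ^ (2 * (n + 1) - 2) := by
    intro n
    obtain ⟨h1, h2⟩ := key n
    set θ : ℝ := (1/2:ℝ)^(n+1) with hθ
    have hθpos : 0 < θ := by positivity
    have hna : (0:ℝ) < ‖1 - a n‖ := lt_of_lt_of_le (by positivity) h2
    have hpos : (0:ℝ) < ‖1 - a n‖ ^ 2 := by positivity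
    have hexp : ((1:ℝ)/2)^(2*(n+1)-2) = 4 * θ^2 := by
      have he : 2*(n+1)-2 = 2*n := by omega
      rw [he, hθ, ← pow_mul]
      have he2 : (n+1)*2 = 2*n + 2 := by ring
      rw [he2, pow_add]
      ring
    rw [h1, hexp, div_le_iff₀ hpos]
    have hsq : ((225/256:ℝ) * θ)^2 ≤ ‖1 - a n‖^2 :=
      pow_le_pow_left₀ (by positivity) h2 2
    have h3 : Real.pi ^ 2 / 15 * (4 * θ^2) * ((225/256:ℝ) * θ)^2 ≤
        Real.pi ^ 2 / 15 * (4 * θ^2) * ‖1 - a n‖^2 :=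
      mul_le_mul_of_nonneg_left hsq (by positivity)
    have h9 : (9:ℝ) ≤ Real.pi^2 := by nlinarith
    nlinarith [mul_nonneg (sub_nonneg.2 h9) (pow_nonneg hθpos.le 4)]
  refine ⟨hbound, ?_⟩
  apply Summable.of_nonneg_of_le _ hbound
  · have he : (fun n : ℕ => Real.pi ^ 2 / 15 * ((1:ℝ) / 2) ^ (2 * (n + 1) - 2)) =
        fun n : ℕ => Real.pi ^ 2 / 15 * ((1:ℝ)/4) ^ n := by
      funext n
      have h : 2*(n+1)-2 = 2*n := by omega
      rw [h, pow_mul]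
      norm_num
    rw [he]
    exact (summable_geometric_of_lt_one (by norm_num) (by norm_num)).mul_left _
  · intro n
    apply div_nonneg _ (sq_nonneg _)
    rw [(key n).1]
    positivity
end

section
/- Suppose H is analytic on the unit disk with H(z) = z/(1 + λz∫₀ᶻ ω(t)dt) where ω is analytic with |ω| ≤ 1 on 𝔻 and λ ∈ (0, √2 − 1]. Then for |z| = r < 1, Re{(1 − λ·conj(z²ω(z)))(1 + λz∫₀ᶻω(t)dt)} / (|1 − λz²ω(z)|·|1 + λz∫₀ᶻω(t)dt|) ≥ (1 − 2λr² − λ²r⁴)/(1 + λr²)². -/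
open Complex Metric

/-- If `H(z) = z/(1 + λ z ∫₀ᶻ ω(t) dt)` with `ω` analytic, `|ω| ≤ 1` on the unit disk and
`λ ∈ (0, √2 − 1]`, then for `|z| = r < 1`,
`Re{(1 − λ conj(z²ω(z)))(1 + λ z ∫₀ᶻ ω)} / (|1 − λz²ω(z)| |1 + λ z ∫₀ᶻ ω|)
  ≥ (1 − 2λr² − λ²r⁴)/(1 + λr²)²`. Here `∫₀ᶻ ω(t) dt = z ∫₀¹ ω(sz) ds`. -/
theorem stmt_19 (lam : ℝ) (hlam : 0 < lam) (hlam' : lam ≤ Real.sqrt 2 - 1)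
    (ω H : ℂ → ℂ) (hω : DifferentiableOn ℂ ω (ball (0 : ℂ) 1))
    (hω1 : ∀ z ∈ ball (0 : ℂ) 1, ‖ω z‖ ≤ 1)
    (hH : ∀ z ∈ ball (0 : ℂ) 1,
      H z = z / (1 + (lam : ℂ) * z * (z * ∫ s in (0 : ℝ)..1, ω ((s : ℂ) * z)))) :
    ∀ z ∈ ball (0 : ℂ) 1, ∀ r : ℝ, r = ‖z‖ →
      (1 - 2 * lam * r ^ 2 - lam ^ 2 * r ^ 4) / (1 + lam * r ^ 2) ^ 2 ≤
        ((1 - (lam : ℂ) * (starRingEnd ℂ) (z ^ 2 * ω z)) *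
            (1 + (lam : ℂ) * z * (z * ∫ s in (0 : ℝ)..1, ω ((s : ℂ) * z)))).re /
          (‖1 - (lam : ℂ) * z ^ 2 * ω z‖ *
            ‖1 + (lam : ℂ) * z * (z * ∫ s in (0 : ℝ)..1, ω ((s : ℂ) * z))‖) := by
  intro z hz r hr
  have hr0 : 0 ≤ r := hr ▸ norm_nonneg z
  have hr1 : r < 1 := by rw [hr]; simpa [mem_ball, dist_eq_norm] using hz
  have hlam1 : lam < 1 := lt_of_le_of_lt hlam' (by nlinarith [Real.sq_sqrt (by norm_num : (2:ℝ) ≥ 0), Real.sqrt_nonneg 2])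
  set t : ℝ := lam * r ^ 2 with ht
  have ht0 : 0 ≤ t := by positivity
  have ht1 : t < 1 := by nlinarith
  have htle : 2 * t + t ^ 2 ≤ 1 := by
    have h2 : Real.sqrt 2 ^ 2 = 2 := Real.sq_sqrt (by norm_num)
    have hr2 : r ^ 2 ≤ 1 := by nlinarith
    have htlam : t ≤ lam := by rw [ht]; nlinarith
    have : t ≤ Real.sqrt 2 - 1 := le_trans htlam hlam'
    nlinarith [Real.sqrt_nonneg 2]
  set a : ℂ := (lam : ℂ) * z ^ 2 * ω z with ha
  set b : ℂ := (lam : ℂ) * z * (z * ∫ s in (0 : ℝ)..1, ω ((s : ℂ) * z)) with hb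
  -- bound on the integral
  have hint : ‖∫ s in (0 : ℝ)..1, ω ((s : ℂ) * z)‖ ≤ 1 := by
    have := intervalIntegral.norm_integral_le_of_norm_le_const
      (a := (0:ℝ)) (b := 1) (C := 1) (f := fun s : ℝ => ω ((s : ℂ) * z)) ?_
    · simpa using this
    · intro s hs
      rw [Set.uIoc_of_le (by norm_num)] at hs
      apply hω1
      simp only [mem_ball, dist_zero_right, norm_mul, Complex.norm_real]
      calc |s| * ‖z‖ ≤ 1 * ‖z‖ := by
            apply mul_le_mul_of_nonneg_right _ (norm_nonneg z)
            rw [abs_le]; exact ⟨by linarith [hs.1], hs.2⟩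
        _ < 1 := by rw [one_mul, ← hr]; exact hr1
  have hA : ‖a‖ ≤ t := by
    rw [ha]
    calc ‖(lam : ℂ) * z ^ 2 * ω z‖ = lam * ‖z‖ ^ 2 * ‖ω z‖ := by
          simp [norm_mul, norm_pow, abs_of_pos hlam]
      _ ≤ lam * ‖z‖ ^ 2 * 1 := by
          apply mul_le_mul_of_nonneg_left (hω1 z hz); positivity
      _ = t := by rw [ht, hr]; ring
  have hB : ‖b‖ ≤ t := by
    rw [hb]
    calc ‖(lam : ℂ) * z * (z * ∫ s in (0 : ℝ)..1, ω ((s : ℂ) * z))‖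
        = lam * ‖z‖ * (‖z‖ * ‖∫ s in (0 : ℝ)..1, ω ((s : ℂ) * z)‖) := by
          simp [norm_mul, abs_of_pos hlam]
      _ ≤ lam * ‖z‖ * (‖z‖ * 1) := by
          apply mul_le_mul_of_nonneg_left _ (by positivity)
          exact mul_le_mul_of_nonneg_left hint (norm_nonneg z)
      _ = t := by rw [ht, hr]; ring
  -- numerator lower bound
  have hre : 1 - 2 * t - t ^ 2 ≤ ((1 - (starRingEnd ℂ) a) * (1 + b)).re := by
    have e : (1 - (starRingEnd ℂ) a) * (1 + b)
        = 1 + b - (starRingEnd ℂ) a - (starRingEnd ℂ) a * b := by ring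
    rw [e]
    have h1 : -‖b‖ ≤ b.re := neg_abs_le b.re |>.trans' (by
      have := Complex.abs_re_le_norm b; linarith [abs_nonneg b.re])
    have h2 : ((starRingEnd ℂ) a).re ≤ ‖a‖ := by
      rw [Complex.conj_re]
      exact (le_abs_self _).trans (Complex.abs_re_le_norm a)
    have h3 : ((starRingEnd ℂ) a * b).re ≤ ‖a‖ * ‖b‖ := by
      calc ((starRingEnd ℂ) a * b).re ≤ |((starRingEnd ℂ) a * b).re| := le_abs_self _
        _ ≤ ‖(starRingEnd ℂ) a * b‖ := by
            simpa using Complex.abs_re_le_norm ((starRingEnd ℂ) a * b)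
        _ = ‖a‖ * ‖b‖ := by simp [norm_mul]
    simp only [Complex.sub_re, Complex.add_re, Complex.one_re]
    have hAB : ‖a‖ * ‖b‖ ≤ t * t := by
      apply mul_le_mul hA hB (norm_nonneg b) ht0
    have hbre : -t ≤ b.re := by
      have : -‖b‖ ≤ b.re := h1
      linarith
    nlinarith
  have hN0 : 0 ≤ 1 - 2 * t - t ^ 2 := by linarith
  -- denominator bounds
  have hD1 : ‖(1:ℂ) - a‖ ≤ 1 + t := by
    calc ‖(1:ℂ) - a‖ ≤ ‖(1:ℂ)‖ + ‖a‖ := norm_sub_le _ _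
      _ ≤ 1 + t := by simpa using hA
  have hD2 : ‖(1:ℂ) + b‖ ≤ 1 + t := by
    calc ‖(1:ℂ) + b‖ ≤ ‖(1:ℂ)‖ + ‖b‖ := norm_add_le _ _
      _ ≤ 1 + t := by simpa using hB
  have hD1' : 0 < ‖(1:ℂ) - a‖ := by
    have : ‖a‖ < ‖(1:ℂ)‖ := by simpa using lt_of_le_of_lt hA ht1
    calc (0:ℝ) < ‖(1:ℂ)‖ - ‖a‖ := by linarith
      _ ≤ ‖(1:ℂ) - a‖ := by
        have := norm_sub_norm_le (1:ℂ) a; linarith [abs_le.mp (abs_norm_sub_norm_le (1:ℂ) a)]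
  have hD2' : 0 < ‖(1:ℂ) + b‖ := by
    have : ‖b‖ < ‖(1:ℂ)‖ := by simpa using lt_of_le_of_lt hB ht1
    have h := norm_add_le (1:ℂ) (-(1+b))
    have h2 : ‖(1:ℂ)‖ - ‖b‖ ≤ ‖(1:ℂ) + b‖ := by
      have := norm_sub_norm_le (1:ℂ) (-b)
      simpa [sub_neg_eq_add] using this
    linarith
  have hgoal : (1 - 2 * t - t ^ 2) / (1 + t) ^ 2 ≤
      ((1 - (starRingEnd ℂ) a) * (1 + b)).re / (‖(1:ℂ) - a‖ * ‖(1:ℂ) + b‖) := by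
    apply div_le_div₀ (le_trans hN0 hre) hre (by positivity)
    calc ‖(1:ℂ) - a‖ * ‖(1:ℂ) + b‖ ≤ (1 + t) * (1 + t) :=
          mul_le_mul hD1 hD2 (norm_nonneg _) (by linarith)
      _ = (1 + t) ^ 2 := by ring
  have hconj : (starRingEnd ℂ) a = (lam : ℂ) * (starRingEnd ℂ) (z ^ 2 * ω z) := by
    rw [ha]; simp [map_mul, Complex.conj_ofReal]; ring
  have hNeq : 1 - 2 * lam * r ^ 2 - lam ^ 2 * r ^ 4 = 1 - 2 * t - t ^ 2 := by
    rw [ht]; ring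
  have hDeq : (1 + lam * r ^ 2) ^ 2 = (1 + t) ^ 2 := by rw [ht]
  rw [hNeq, hDeq, ← hconj]
  exact hgoal
end
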